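/- arXiv:1809.08762 — 7 statements merged into one kernel-verified Lean document; each statement's English description precedes it below -/
import Mathlib

section
/- Let G = A ∗_C B be an amalgamated free product of groups A and B over a common subgroup C (given by injective homomorphisms of C into A and into B). If N is a normal subgroup of A such that N ∩ C = {1}, then A ∩ ⟪N⟫ = N, where ⟪N⟫ is the normal closure of N in G; equivalently, the natural homomorphism A/N → G/⟪N⟫ is injective. -/
open Monoid

section Aux

variable {C : Type*} [Group C] {K : Bool → Type*} [∀ b, Group (K b)]
  (φ : ∀ b, C →* K b) (N : Subgroup (K true)) [N.Normal]

/-- The family with the `true` factor replaced by its quotient by `N`. -/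
def auxK : Bool → Type _ := fun b => match b with
  | true => K true ⧸ N
  | false => K false

instance auxKGroup : ∀ b, Group (auxK (K := K) N b)
  | true => inferInstanceAs (Group (K true ⧸ N))
  | false => inferInstanceAs (Group (K false))

/-- The maps from `C` into the new family. -/
def auxφ : ∀ b, C →* auxK (K := K) N b
  | true => (QuotientGroup.mk' N).comp (φ true)
  | false => φ false

/-- The maps from the old family into the new pushout. -/
def auxf : ∀ b, K b →* PushoutI (auxφ φ N)
  | true => (PushoutI.of (φ := auxφ φ N) true).comp (QuotientGroup.mk' N)
  | false => PushoutI.of (φ := auxφ φ N) false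

theorem auxf_comp (b : Bool) :
    (auxf φ N b).comp (φ b) = PushoutI.base (auxφ φ N) := by
  cases b <;>
    [exact PushoutI.of_comp_eq_base false;
     exact (MonoidHom.comp_assoc _ _ _).symm.trans (PushoutI.of_comp_eq_base true)]

/-- The induced homomorphism from the pushout over `K` to the pushout over `auxK`. -/
def auxΘ : PushoutI φ →* PushoutI (auxφ φ N) :=
  PushoutI.lift (auxf φ N) (PushoutI.base (auxφ φ N)) (auxf_comp φ N)

theorem auxΘ_of_true (a : K true) :
    auxΘ φ N (PushoutI.of (φ := φ) true a)
      = PushoutI.of (φ := auxφ φ N) true (QuotientGroup.mk' N a) :=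
  PushoutI.lift_of _ _ _ a

theorem auxφ_injective (hφ : ∀ b, Function.Injective (φ b))
    (hNC : N ⊓ (φ true).range = ⊥) :
    ∀ b, Function.Injective (auxφ φ N b) := by
  intro b
  cases b
  · exact hφ false
  · rw [← MonoidHom.ker_eq_bot_iff, eq_bot_iff]
    intro c hc
    have h1 : φ true c ∈ N := (QuotientGroup.eq_one_iff _).1 hc
    have h2 : φ true c ∈ N ⊓ (φ true).range := ⟨h1, ⟨c, rfl⟩⟩
    rw [hNC] at h2
    have h3 : φ true c = 1 := h2
    have h4 : c = 1 := hφ true (show φ true c = φ true 1 by rw [h3, map_one])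
    simp [h4, MonoidHom.mem_ker]

end Aux

/-- **Dehn filling of an amalgamated free product is injective on the filled factor.**
Let `G = A ∗_C B` be an amalgamated free product of groups `A = K true` and `B = K false`
over a common group `C`, given by injective homomorphisms `φ b : C →* K b`. If `N` is a
normal subgroup of `A` meeting the image of `C` trivially, then `A ∩ ⟪N⟫ = N` in `G`
(with `A` and `N` regarded as subgroups of `G` via the canonical embedding); equivalently
the natural homomorphism `A/N → G/⟪N⟫` is injective. -/
theorem amalgamated_inf_normalClosure {C : Type*} [Group C] {K : Bool → Type*}
    [∀ b, Group (K b)] (φ : ∀ b, C →* K b) (hφ : ∀ b, Function.Injective (φ b))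
    (N : Subgroup (K true)) [N.Normal] (hNC : N ⊓ (φ true).range = ⊥) :
    (Monoid.PushoutI.of (φ := φ) true).range ⊓
        Subgroup.normalClosure
          ((N.map (Monoid.PushoutI.of (φ := φ) true) : Subgroup (Monoid.PushoutI φ)) :
            Set (Monoid.PushoutI φ))
      = N.map (Monoid.PushoutI.of (φ := φ) true) := by
  apply le_antisymm
  · rintro x ⟨⟨a, rfl⟩, hx⟩
    -- `x = of a` lies in the normal closure; apply `auxΘ`.
    have hker : Subgroup.normalClosure
        ((N.map (Monoid.PushoutI.of (φ := φ) true) : Subgroup (Monoid.PushoutI φ)) :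
          Set (Monoid.PushoutI φ)) ≤ (auxΘ φ N).ker := by
      apply Subgroup.normalClosure_le_normal
      rintro _ ⟨n, hn, rfl⟩
      have : auxΘ φ N (Monoid.PushoutI.of (φ := φ) true n) = 1 := by
        rw [auxΘ_of_true]
        have : QuotientGroup.mk' N n = 1 := (QuotientGroup.eq_one_iff n).2 hn
        rw [this]; exact map_one _
      simpa [MonoidHom.mem_ker] using this
    have h1 : auxΘ φ N (Monoid.PushoutI.of (φ := φ) true a) = 1 := hker hx
    rw [auxΘ_of_true] at h1
    have hinj := Monoid.PushoutI.of_injective (auxφ_injective φ N hφ hNC) true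
    have h2 : QuotientGroup.mk' N a = 1 := by
      apply hinj; rw [h1]; exact (map_one _).symm
    exact ⟨a, (QuotientGroup.eq_one_iff a).1 h2, rfl⟩
  · intro x hx
    refine ⟨?_, Subgroup.subset_normalClosure hx⟩
    obtain ⟨n, _, rfl⟩ := hx
    exact ⟨n, rfl⟩
end

section
/- Let G = A ∗_C B be an amalgamated free product of groups A and B over a common subgroup C (given by injective homomorphisms of C into A and into B). Suppose N is a normal subgroup of A with N ∩ C = {1}. Let Q = G/⟪N⟫ and R = A/N, where R is identified with a subgroup of Q via the (injective) natural homomorphism. Then there is an isomorphism of ℤQ-modules Rel(G, ⟪N⟫) ≅ ℤQ ⊗_{ℤR} Rel(A, N). -/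
open scoped TensorProduct

/-- The `ℤQ`-submodule of relations defining the induced module
`ℤQ ⊗_{ℤR} Rel(A, N)` (where `R = A/N` maps to `Q` via the homomorphism induced by `f`)
as a quotient of `ℤQ ⊗_ℤ Rel(A, N)`; here `Rel(A, N)` is the abelianization of `N`,
on which `h ∈ A` acts by conjugation. -/
noncomputable def relSub (Q : Type*) [Group Q] (A : Type*) [Group A]
    (N : Subgroup A) [N.Normal] (f : A →* Q) :
    Submodule (MonoidAlgebra ℤ Q)
      (MonoidAlgebra ℤ Q ⊗[ℤ] Additive (Abelianization ↥N)) :=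
  Submodule.span (MonoidAlgebra ℤ Q)
    {x | ∃ (a : MonoidAlgebra ℤ Q) (h : A) (m : Additive (Abelianization ↥N)),
      x = (a * MonoidAlgebra.of ℤ Q (f h)) ⊗ₜ[ℤ] m -
        a ⊗ₜ[ℤ] Additive.ofMul ((Abelianization.map (MulAut.conjNormal h).toMonoidHom)
          (Additive.toMul m))}

/-- `Rel(G, K)` (the abelianization of `K`, with the `Q = G/K` action induced by
conjugation) is isomorphic, as a `ℤQ`-module, to the induced module
`ℤQ ⊗_{ℤR} Rel(A, N)`: there is an additive isomorphism which intertwines the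
conjugation action of `G` (inducing the `Q`-action on the left) with multiplication by
group elements of `Q` in the group ring (the `Q`-action on the right). -/
noncomputable def RelModuleIsoInd (G : Type*) [Group G] {A : Type*} [Group A]
    (f : A →* G) (N : Subgroup A) [N.Normal] (K : Subgroup G) [K.Normal] : Prop :=
  ∃ e : Additive (Abelianization ↥K) ≃+
      ((MonoidAlgebra ℤ (G ⧸ K) ⊗[ℤ] Additive (Abelianization ↥N)) ⧸
        relSub (G ⧸ K) A N ((QuotientGroup.mk' K).comp f)),
    ∀ (g : G) (x : Additive (Abelianization ↥K)),
      e (Additive.ofMul ((Abelianization.map (MulAut.conjNormal g).toMonoidHom)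
          (Additive.toMul x))) =
        MonoidAlgebra.of ℤ (G ⧸ K) (QuotientGroup.mk g) • e x

set_option linter.unusedSectionVars false

namespace AmalgRel

open Monoid Monoid.PushoutI Subgroup Function

section Gadget

variable {W X : Type*} [Group W] [Group X] (e : W →* X)

/-- A representative of the right coset `(range e) * x`. -/
noncomputable def rrep (x : X) : X :=
  (Quotient.mk (QuotientGroup.rightRel e.range) x).out

lemma rrep_mul (w : W) (x : X) : rrep e (e w * x) = rrep e x := by
  unfold rrep
  congr 1
  exact Quotient.sound ((QuotientGroup.rightRel_apply).2
    ⟨w⁻¹, by simp [mul_inv_rev, ← mul_assoc]⟩)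

lemma exists_rpart (x : X) : ∃ w : W, e w * rrep e x = x := by
  have h := (QuotientGroup.rightRel_apply).1
    (Quotient.exact (Quotient.out_eq (Quotient.mk (QuotientGroup.rightRel e.range) x)))
  obtain ⟨w, hw⟩ := h
  exact ⟨w, by rw [hw]; simp [rrep]⟩

/-- The "subgroup part" of `x` relative to the representative of its coset. -/
noncomputable def rpart (x : X) : W := Classical.choose (exists_rpart e x)

lemma rpart_spec (x : X) : e (rpart e x) * rrep e x = x :=
  Classical.choose_spec (exists_rpart e x)

lemma rpart_mul (he : Function.Injective e) (w : W) (x : X) :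
    rpart e (e w * x) = w * rpart e x := by
  apply he
  have h1 : e (rpart e (e w * x)) * rrep e x = e w * x := by
    rw [← rrep_mul e w x]; exact rpart_spec e _
  have h3 : e (w * rpart e x) * rrep e x = e w * x := by
    rw [map_mul, mul_assoc, rpart_spec]
  exact mul_right_cancel (h1.trans h3.symm)

end Gadget

section Setup

variable {C : Type*} [Group C] {K : Bool → Type*} [∀ b, Group (K b)]
  (φ : ∀ b, C →* K b) (N : Subgroup (K true)) [N.Normal]

/-- The big group `G`. -/
abbrev BG := Monoid.PushoutI φ

/-- The normal closure of (the image of) `N`. -/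
abbrev KK : Subgroup (BG φ) :=
  Subgroup.normalClosure
    ((N.map (Monoid.PushoutI.of (φ := φ) true) : Subgroup (BG φ)) : Set (BG φ))

/-- The filled quotient `Q`. -/
abbrev Qq := BG φ ⧸ KK φ N

/-- Projection `G → Q`. -/
noncomputable abbrev pr : BG φ →* Qq φ N := QuotientGroup.mk' (KK φ N)

/-- `f : A → Q`. -/
noncomputable abbrev fA : K true →* Qq φ N := (pr φ N).comp (Monoid.PushoutI.of true)

/-- `B → Q`. -/
noncomputable abbrev fB : K false →* Qq φ N := (pr φ N).comp (Monoid.PushoutI.of false)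

lemma jn_mem_KK (n : N) : Monoid.PushoutI.of (φ := φ) true (n : K true) ∈ KK φ N :=
  Subgroup.subset_normalClosure (Subgroup.mem_map_of_mem _ n.2)

lemma fA_n (n : N) : fA φ N (n : K true) = 1 := by
  rw [MonoidHom.comp_apply]
  exact (QuotientGroup.eq_one_iff _).2 (jn_mem_KK φ N n)

/-- `R = A/N`. -/
abbrev Rr := K true ⧸ N

noncomputable abbrev mkN : K true →* Rr N := QuotientGroup.mk' N

/-- The map `ι : R → Q`. -/
noncomputable def iR : Rr N →* Qq φ N :=
  QuotientGroup.lift N (fA φ N) (fun n hn => fA_n φ N ⟨n, hn⟩)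

@[simp] lemma iR_mkN (a : K true) : iR φ N (mkN N a) = fA φ N a := rfl

/-- The comparison pushout `R ∗_C B`. -/
def Kb' : Bool → Type _
  | true => Rr N
  | false => K false

instance (b : Bool) : Group (Kb' (K := K) N b) := by
  cases b
  · exact inferInstanceAs (Group (K false))
  · exact inferInstanceAs (Group (Rr N))

def φ' : ∀ b, C →* Kb' (K := K) N b
  | true => (QuotientGroup.mk' N).comp (φ true)
  | false => φ false

/-- The map `G → R ∗_C B`. -/
noncomputable def pr2 : BG φ →* Monoid.PushoutI (φ' φ N) :=
  Monoid.PushoutI.lift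
    (fun b => match b with
      | true => (Monoid.PushoutI.of (φ := φ' φ N) true).comp (mkN N)
      | false => Monoid.PushoutI.of (φ := φ' φ N) false)
    (Monoid.PushoutI.base (φ' φ N))
    (by
      intro b
      cases b
      · exact Monoid.PushoutI.of_comp_eq_base false
      · exact MonoidHom.ext fun c => Monoid.PushoutI.of_apply_eq_base (φ := φ' φ N) true c)

lemma pr2_of_true (a : K true) :
    pr2 φ N (Monoid.PushoutI.of true a) = Monoid.PushoutI.of (φ := φ' φ N) true (mkN N a) :=
  Monoid.PushoutI.lift_of _ _ _ _

lemma pr2_of_false (b : K false) :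
    pr2 φ N (Monoid.PushoutI.of false b) = Monoid.PushoutI.of (φ := φ' φ N) false b :=
  Monoid.PushoutI.lift_of _ _ _ _

lemma KK_le_ker : KK φ N ≤ (pr2 φ N).ker := by
  apply Subgroup.normalClosure_le_normal
  rintro x hx
  obtain ⟨n, hn, rfl⟩ := hx
  rw [SetLike.mem_coe, MonoidHom.mem_ker, pr2_of_true]
  have : mkN N n = 1 := (QuotientGroup.eq_one_iff _).2 hn
  rw [this]
  exact map_one (Monoid.PushoutI.of (φ := φ' φ N) true)

/-- The descended map `Q → R ∗_C B`. -/
noncomputable def pr2' : Qq φ N →* Monoid.PushoutI (φ' φ N) :=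
  QuotientGroup.lift (KK φ N) (pr2 φ N) (fun g hg => KK_le_ker φ N hg)

@[simp] lemma pr2'_pr (g : BG φ) : pr2' φ N (pr φ N g) = pr2 φ N g := rfl

lemma φ'_injective (hφ : ∀ b, Function.Injective (φ b)) (hNC : N ⊓ (φ true).range = ⊥) :
    ∀ b, Function.Injective (φ' φ N b) := by
  intro b
  cases b
  · exact hφ false
  · intro c c' hcc
    apply hφ true
    have h2 : (φ true c)⁻¹ * φ true c' ∈ N := by
      have h : (QuotientGroup.mk (φ true c) : Rr N) = QuotientGroup.mk (φ true c') := hcc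
      exact QuotientGroup.eq.1 h
    have h3 : (φ true c)⁻¹ * φ true c' ∈ N ⊓ (φ true).range :=
      ⟨h2, ⟨c⁻¹ * c', by simp⟩⟩
    rw [hNC] at h3
    have h4 := Subgroup.mem_bot.1 h3
    rw [inv_mul_eq_one] at h4
    exact h4

lemma iR_injective (hφ : ∀ b, Function.Injective (φ b)) (hNC : N ⊓ (φ true).range = ⊥) :
    Function.Injective (iR φ N) := by
  have h : ∀ r, pr2' φ N (iR φ N r) = Monoid.PushoutI.of (φ := φ' φ N) true r := by
    intro r
    induction r using QuotientGroup.induction_on with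
    | H a => exact pr2_of_true φ N a
  intro r r' hrr
  apply Monoid.PushoutI.of_injective (φ'_injective φ N hφ hNC) true
  rw [← h r, ← h r', hrr]

lemma fB_injective (hφ : ∀ b, Function.Injective (φ b)) (hNC : N ⊓ (φ true).range = ⊥) :
    Function.Injective (fB φ N) := by
  have h : ∀ b, pr2' φ N (fB φ N b) = Monoid.PushoutI.of (φ := φ' φ N) false b :=
    fun b => pr2_of_false φ N b
  intro b b' hbb
  apply Monoid.PushoutI.of_injective (φ'_injective φ N hφ hNC) false
  rw [← h b, ← h b', hbb]

end Setup

section Mod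

variable {C : Type*} [Group C] {K : Bool → Type*} [∀ b, Group (K b)]
  (φ : ∀ b, C →* K b) (N : Subgroup (K true)) [N.Normal]

/-- Rel(A,N) as additive group. -/
abbrev AbN := Additive (Abelianization ↥N)

/-- The free module `ℤQ ⊗ Rel(A,N)`. -/
abbrev M0 := MonoidAlgebra ℤ (Qq φ N) ⊗[ℤ] AbN N

/-- The induced module. -/
abbrev Mq := M0 φ N ⧸ relSub (Qq φ N) (K true) N (fA φ N)

noncomputable abbrev mkM : M0 φ N →ₗ[MonoidAlgebra ℤ (Qq φ N)] Mq φ N :=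
  Submodule.mkQ _

/-- conjugation action on `Rel(A,N)`. -/
def cj (h : K true) (m : AbN N) : AbN N :=
  Additive.ofMul ((Abelianization.map (MulAut.conjNormal h).toMonoidHom) (Additive.toMul m))

lemma cj_of (h : K true) (n : N) :
    cj N h (Additive.ofMul (Abelianization.of n)) =
      Additive.ofMul (Abelianization.of
        (⟨h * n * h⁻¹, (‹N.Normal›).conj_mem n n.2 h⟩ : N)) := by
  have h1 : (((MulAut.conjNormal h : MulAut ↥N)).toMonoidHom n : K true) =
      ((⟨h * n * h⁻¹, (‹N.Normal›).conj_mem n n.2 h⟩ : N) : K true) := by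
    simp [MulAut.conjNormal_apply]
  have h2 : ((MulAut.conjNormal h : MulAut ↥N)).toMonoidHom n =
      (⟨h * n * h⁻¹, (‹N.Normal›).conj_mem n n.2 h⟩ : N) := Subtype.ext h1
  unfold cj
  rw [toMul_ofMul, Abelianization.map_of, h2]

lemma relM (a : MonoidAlgebra ℤ (Qq φ N)) (h : K true) (m : AbN N) :
    mkM φ N ((a * MonoidAlgebra.of ℤ (Qq φ N) (fA φ N h)) ⊗ₜ[ℤ] m) =
      mkM φ N (a ⊗ₜ[ℤ] cj N h m) := by
  rw [Submodule.mkQ_apply, Submodule.mkQ_apply, ← sub_eq_zero,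
    ← Submodule.Quotient.mk_sub, Submodule.Quotient.mk_eq_zero]
  exact Submodule.subset_span ⟨a, h, m, rfl⟩

lemma smulM0 (r y : MonoidAlgebra ℤ (Qq φ N)) (m : AbN N) :
    r • (y ⊗ₜ[ℤ] m : M0 φ N) = (r * y) ⊗ₜ[ℤ] m := by
  rw [TensorProduct.smul_tmul', smul_eq_mul]

lemma smulMq (r y : MonoidAlgebra ℤ (Qq φ N)) (m : AbN N) :
    r • mkM φ N (y ⊗ₜ[ℤ] m) = mkM φ N ((r * y) ⊗ₜ[ℤ] m) := by
  rw [← map_smul, smulM0]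

/-- Section of `A → R`. -/
noncomputable def uR (r : Rr N) : K true :=
  @ite _ (r = 1) (Classical.dec _) 1 (Quotient.out r)

@[simp] lemma uR_coe (r : Rr N) : ((uR N r : K true) : Rr N) = r := by
  unfold uR
  split
  · subst ‹r = 1›; simp
  · exact QuotientGroup.out_eq' r

@[simp] lemma mkN_uR (r : Rr N) : mkN N (uR N r) = r := uR_coe N r

lemma uR_conj_mem (a : K true) (r : Rr N) :
    (uR N (mkN N a * r))⁻¹ * a * uR N r ∈ N := by
  apply (QuotientGroup.eq_one_iff ((uR N (mkN N a * r))⁻¹ * a * uR N r)).1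
  show mkN N _ = 1
  rw [map_mul, map_mul, map_inv, mkN_uR, mkN_uR]
  show (mkN N a * r)⁻¹ * mkN N a * r = 1
  group

/-- The `A`-cocycle. -/
noncomputable def gamA (a : K true) (q : Qq φ N) : Mq φ N :=
  mkM φ N (MonoidAlgebra.single (iR φ N (mkN N a * rpart (iR φ N) q)) 1 ⊗ₜ[ℤ]
    Additive.ofMul (Abelianization.of
      (⟨(uR N (mkN N a * rpart (iR φ N) q))⁻¹ * a * uR N (rpart (iR φ N) q),
        uR_conj_mem N a _⟩ : N)))

/-- image of the canonical generators. -/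
noncomputable def epsN (n : N) : Mq φ N :=
  mkM φ N (MonoidAlgebra.single 1 1 ⊗ₜ[ℤ] Additive.ofMul (Abelianization.of n))

lemma mkM_congr {x x' : Qq φ N} {n n' : N} (hx : x = x') (hn : (n : K true) = (n' : K true)) :
    mkM φ N (MonoidAlgebra.single x (1:ℤ) ⊗ₜ[ℤ] Additive.ofMul (Abelianization.of n)) =
      mkM φ N (MonoidAlgebra.single x' (1:ℤ) ⊗ₜ[ℤ] Additive.ofMul (Abelianization.of n')) := by
  subst hx
  cases Subtype.ext hn
  rfl

lemma gamA_one (q : Qq φ N) : gamA φ N 1 q = 0 := by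
  unfold gamA
  have h1 : (⟨(uR N (mkN N 1 * rpart (iR φ N) q))⁻¹ * 1 * uR N (rpart (iR φ N) q),
      uR_conj_mem N 1 _⟩ : N) = 1 := by
    apply Subtype.ext
    show (uR N (mkN N 1 * rpart (iR φ N) q))⁻¹ * 1 * uR N (rpart (iR φ N) q) = 1
    rw [show mkN N (1 : K true) = 1 from map_one _, one_mul, mul_one, inv_mul_cancel]
  rw [h1, show (Abelianization.of (1 : N)) = 1 from map_one _, ofMul_one,
    TensorProduct.tmul_zero, map_zero]

lemma gamA_n (n : N) (q : Qq φ N) : gamA φ N (n : K true) q = epsN φ N n := by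
  have key := relM φ N (MonoidAlgebra.single (iR φ N (rpart (iR φ N) q)) 1)
    (uR N (rpart (iR φ N) q))⁻¹ (Additive.ofMul (Abelianization.of n))
  have h1 : gamA φ N (n : K true) q =
      mkM φ N (MonoidAlgebra.single (iR φ N (rpart (iR φ N) q)) 1 ⊗ₜ[ℤ]
        cj N (uR N (rpart (iR φ N) q))⁻¹ (Additive.ofMul (Abelianization.of n))) := by
    unfold gamA
    rw [cj_of]
    have hm : mkN N (n : K true) = 1 := (QuotientGroup.eq_one_iff _).2 n.2
    apply mkM_congr
    · rw [hm, one_mul]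
    · show (uR N (mkN N (n:K true) * rpart (iR φ N) q))⁻¹ * (n:K true) * uR N (rpart (iR φ N) q)
        = (uR N (rpart (iR φ N) q))⁻¹ * (n:K true) * ((uR N (rpart (iR φ N) q))⁻¹)⁻¹
      rw [hm, one_mul, inv_inv]
  rw [h1, ← key]
  unfold epsN
  have h2 : MonoidAlgebra.single (iR φ N (rpart (iR φ N) q)) (1:ℤ) *
      MonoidAlgebra.of ℤ (Qq φ N) (fA φ N (uR N (rpart (iR φ N) q))⁻¹) =
      MonoidAlgebra.single 1 1 := by
    rw [MonoidAlgebra.of_apply, MonoidAlgebra.single_mul_single, one_mul]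
    congr 1
    rw [map_inv]
    rw [show fA φ N (uR N (rpart (iR φ N) q)) = iR φ N (rpart (iR φ N) q) by
      rw [← iR_mkN φ N, mkN_uR]]
    simp
  rw [h2]

lemma gamA_cocycle (hφ : ∀ b, Function.Injective (φ b)) (hNC : N ⊓ (φ true).range = ⊥)
    (a a' : K true) (q : Qq φ N) :
    gamA φ N (a * a') q =
      MonoidAlgebra.single (fA φ N a) (1:ℤ) • gamA φ N a' q + gamA φ N a (fA φ N a' * q) := by
  have hrp : rpart (iR φ N) (fA φ N a' * q) = mkN N a' * rpart (iR φ N) q := by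
    rw [show fA φ N a' = iR φ N (mkN N a') from rfl]
    exact rpart_mul _ (iR_injective φ N hφ hNC) _ _
  have hidx : mkN N a * (mkN N a' * rpart (iR φ N) q) = mkN N (a * a') * rpart (iR φ N) q := by
    rw [map_mul, mul_assoc]
  have hs : MonoidAlgebra.single (fA φ N a) (1:ℤ) *
      MonoidAlgebra.single (iR φ N (mkN N a' * rpart (iR φ N) q)) 1 =
      MonoidAlgebra.single (iR φ N (mkN N (a * a') * rpart (iR φ N) q)) 1 := by
    rw [MonoidAlgebra.single_mul_single, one_mul]
    congr 1
    rw [show fA φ N a = iR φ N (mkN N a) from rfl, ← map_mul, hidx]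
  have e1 : MonoidAlgebra.single (fA φ N a) (1:ℤ) • gamA φ N a' q =
      mkM φ N (MonoidAlgebra.single (iR φ N (mkN N (a * a') * rpart (iR φ N) q)) 1 ⊗ₜ[ℤ]
        Additive.ofMul (Abelianization.of
          (⟨(uR N (mkN N a' * rpart (iR φ N) q))⁻¹ * a' * uR N (rpart (iR φ N) q),
            uR_conj_mem N a' _⟩ : N))) := by
    unfold gamA
    rw [smulMq, hs]
  have e2 : gamA φ N a (fA φ N a' * q) =
      mkM φ N (MonoidAlgebra.single (iR φ N (mkN N (a * a') * rpart (iR φ N) q)) 1 ⊗ₜ[ℤ]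
        Additive.ofMul (Abelianization.of
          (⟨(uR N (mkN N (a * a') * rpart (iR φ N) q))⁻¹ * a *
              uR N (mkN N a' * rpart (iR φ N) q),
            by rw [← hidx]; exact uR_conj_mem N a (mkN N a' * rpart (iR φ N) q)⟩ : N))) := by
    unfold gamA
    apply mkM_congr
    · rw [hrp, hidx]
    · show (uR N (mkN N a * rpart (iR φ N) (fA φ N a' * q)))⁻¹ * a *
          uR N (rpart (iR φ N) (fA φ N a' * q)) =
        (uR N (mkN N (a * a') * rpart (iR φ N) q))⁻¹ * a *
          uR N (mkN N a' * rpart (iR φ N) q)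
      rw [hrp, hidx]
  rw [e1, e2, ← map_add, ← TensorProduct.tmul_add, ← ofMul_mul,
    mul_comm (Abelianization.of _) (Abelianization.of _), ← map_mul]
  unfold gamA
  apply mkM_congr
  · rfl
  · show (uR N (mkN N (a * a') * rpart (iR φ N) q))⁻¹ * (a * a') * uR N (rpart (iR φ N) q) =
      ((uR N (mkN N (a * a') * rpart (iR φ N) q))⁻¹ * a *
          uR N (mkN N a' * rpart (iR φ N) q)) *
        ((uR N (mkN N a' * rpart (iR φ N) q))⁻¹ * a' * uR N (rpart (iR φ N) q))
    group

end Mod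

section Act

variable {C : Type*} [Group C] {K : Bool → Type*} [∀ b, Group (K b)]
  (φ : ∀ b, C →* K b) (N : Subgroup (K true)) [N.Normal]

/-- The `A`-part of the action on `M × Q`, as a function. -/
noncomputable def tauAf (a : K true) : Mq φ N × Qq φ N → Mq φ N × Qq φ N :=
  fun p => (MonoidAlgebra.single (fA φ N a) (1:ℤ) • p.1 + gamA φ N a p.2, fA φ N a * p.2)

lemma tauAf_one : tauAf φ N 1 = id := by
  funext p
  unfold tauAf
  rw [map_one, gamA_one]
  show ((1 : MonoidAlgebra ℤ (Qq φ N)) • p.1 + 0, 1 * p.2) = p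
  rw [one_smul, add_zero, one_mul]

lemma tauAf_mul (hφ : ∀ b, Function.Injective (φ b)) (hNC : N ⊓ (φ true).range = ⊥)
    (a a' : K true) : tauAf φ N (a * a') = tauAf φ N a ∘ tauAf φ N a' := by
  funext p
  unfold tauAf
  simp only [Function.comp_apply, Prod.mk.injEq]
  refine ⟨?_, ?_⟩
  · rw [gamA_cocycle φ N hφ hNC a a' p.2, smul_add, smul_smul,
      MonoidAlgebra.single_mul_single, one_mul, ← map_mul]
    abel
  · rw [map_mul, mul_assoc]

/-- The `A`-part of the action on `M × Q`. -/
noncomputable def tauA (hφ : ∀ b, Function.Injective (φ b)) (hNC : N ⊓ (φ true).range = ⊥) :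
    K true →* Function.End (Mq φ N × Qq φ N) where
  toFun := tauAf φ N
  map_one' := tauAf_one φ N
  map_mul' a a' := tauAf_mul φ N hφ hNC a a'

/-- auxiliary cocycle data for the `B`-part. -/
noncomputable def DD (b : K false) (q : Qq φ N) : Mq φ N :=
  gamA φ N (φ true (rpart (φ false) b)) (fB φ N (rrep (φ false) b) * q)

/-- The `B`-cocycle. -/
noncomputable def gamB (b : K false) (q : Qq φ N) : Mq φ N :=
  DD φ N (b * rpart (fB φ N) q) (rrep (fB φ N) q) -
    MonoidAlgebra.single (fB φ N b) (1:ℤ) • DD φ N (rpart (fB φ N) q) (rrep (fB φ N) q)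

lemma gamB_one (q : Qq φ N) : gamB φ N 1 q = 0 := by
  unfold gamB
  rw [one_mul, map_one]
  show DD φ N _ _ - (1 : MonoidAlgebra ℤ (Qq φ N)) • DD φ N _ _ = 0
  rw [one_smul, sub_self]

lemma gamB_cocycle (hφ : ∀ b, Function.Injective (φ b)) (hNC : N ⊓ (φ true).range = ⊥)
    (b b' : K false) (q : Qq φ N) :
    gamB φ N (b * b') q =
      MonoidAlgebra.single (fB φ N b) (1:ℤ) • gamB φ N b' q + gamB φ N b (fB φ N b' * q) := by
  have h1 : rpart (fB φ N) (fB φ N b' * q) = b' * rpart (fB φ N) q :=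
    rpart_mul _ (fB_injective φ N hφ hNC) _ _
  have h2 : rrep (fB φ N) (fB φ N b' * q) = rrep (fB φ N) q := rrep_mul _ _ _
  unfold gamB
  rw [h1, h2, smul_sub, smul_smul, MonoidAlgebra.single_mul_single, one_mul, ← map_mul,
    mul_assoc]
  abel

lemma base_comm (c : C) : fA φ N (φ true c) = fB φ N (φ false c) := by
  show pr φ N (Monoid.PushoutI.of true (φ true c)) = pr φ N (Monoid.PushoutI.of false (φ false c))
  rw [Monoid.PushoutI.of_apply_eq_base, Monoid.PushoutI.of_apply_eq_base]

lemma gamB_compat (hφ : ∀ b, Function.Injective (φ b)) (hNC : N ⊓ (φ true).range = ⊥)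
    (c : C) (q : Qq φ N) : gamB φ N (φ false c) q = gamA φ N (φ true c) q := by
  have h1 : rpart (φ false) (φ false c * rpart (fB φ N) q) =
      c * rpart (φ false) (rpart (fB φ N) q) := rpart_mul _ (hφ false) _ _
  have h2 : rrep (φ false) (φ false c * rpart (fB φ N) q) =
      rrep (φ false) (rpart (fB φ N) q) := rrep_mul _ _ _
  have h3 : fA φ N (φ true (rpart (φ false) (rpart (fB φ N) q))) *
      (fB φ N (rrep (φ false) (rpart (fB φ N) q)) * rrep (fB φ N) q) = q := by
    rw [base_comm, ← mul_assoc, ← map_mul, rpart_spec (φ false) (rpart (fB φ N) q),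
      rpart_spec (fB φ N) q]
  unfold gamB DD
  rw [h1, h2, map_mul (φ true), gamA_cocycle φ N hφ hNC, h3, base_comm]
  abel

/-- The `B`-part of the action, as a function. -/
noncomputable def tauBf (b : K false) : Mq φ N × Qq φ N → Mq φ N × Qq φ N :=
  fun p => (MonoidAlgebra.single (fB φ N b) (1:ℤ) • p.1 + gamB φ N b p.2, fB φ N b * p.2)

lemma tauBf_one : tauBf φ N 1 = id := by
  funext p
  unfold tauBf
  rw [map_one, gamB_one]
  show ((1 : MonoidAlgebra ℤ (Qq φ N)) • p.1 + 0, 1 * p.2) = p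
  rw [one_smul, add_zero, one_mul]

lemma tauBf_mul (hφ : ∀ b, Function.Injective (φ b)) (hNC : N ⊓ (φ true).range = ⊥)
    (b b' : K false) : tauBf φ N (b * b') = tauBf φ N b ∘ tauBf φ N b' := by
  funext p
  unfold tauBf
  simp only [Function.comp_apply, Prod.mk.injEq]
  refine ⟨?_, ?_⟩
  · rw [gamB_cocycle φ N hφ hNC b b' p.2, smul_add, smul_smul,
      MonoidAlgebra.single_mul_single, one_mul, ← map_mul]
    abel
  · rw [map_mul, mul_assoc]

/-- The `B`-part of the action on `M × Q`. -/
noncomputable def tauB (hφ : ∀ b, Function.Injective (φ b)) (hNC : N ⊓ (φ true).range = ⊥) :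
    K false →* Function.End (Mq φ N × Qq φ N) where
  toFun := tauBf φ N
  map_one' := tauBf_one φ N
  map_mul' b b' := tauBf_mul φ N hφ hNC b b'

lemma tau_compat (hφ : ∀ b, Function.Injective (φ b)) (hNC : N ⊓ (φ true).range = ⊥)
    (c : C) : tauBf φ N (φ false c) = tauAf φ N (φ true c) := by
  funext p
  unfold tauBf tauAf
  rw [gamB_compat φ N hφ hNC, base_comm]

/-- The glued action of `G` on `M × Q`. -/
noncomputable def tauG (hφ : ∀ b, Function.Injective (φ b)) (hNC : N ⊓ (φ true).range = ⊥) :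
    Monoid.PushoutI φ →* Function.End (Mq φ N × Qq φ N) :=
  Monoid.PushoutI.lift
    (fun b => match b with
      | true => tauA φ N hφ hNC
      | false => tauB φ N hφ hNC)
    ((tauA φ N hφ hNC).comp (φ true))
    (by
      intro b
      cases b
      · exact MonoidHom.ext fun c => tau_compat φ N hφ hNC c
      · rfl)

lemma tauG_of_true (hφ : ∀ b, Function.Injective (φ b)) (hNC : N ⊓ (φ true).range = ⊥)
    (a : K true) :
    tauG φ N hφ hNC (Monoid.PushoutI.of true a) = tauAf φ N a :=
  Monoid.PushoutI.lift_of _ _ _ _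

lemma tauG_of_false (hφ : ∀ b, Function.Injective (φ b)) (hNC : N ⊓ (φ true).range = ⊥)
    (b : K false) :
    tauG φ N hφ hNC (Monoid.PushoutI.of false b) = tauBf φ N b :=
  Monoid.PushoutI.lift_of _ _ _ _

/-- The glued cocycle. -/
noncomputable def Gam (hφ : ∀ b, Function.Injective (φ b)) (hNC : N ⊓ (φ true).range = ⊥)
    (g : Monoid.PushoutI φ) (q : Qq φ N) : Mq φ N :=
  (tauG φ N hφ hNC g (0, q)).1

lemma Gam_of_true (hφ : ∀ b, Function.Injective (φ b)) (hNC : N ⊓ (φ true).range = ⊥)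
    (a : K true) (q : Qq φ N) :
    Gam φ N hφ hNC (Monoid.PushoutI.of true a) q = gamA φ N a q := by
  unfold Gam
  rw [tauG_of_true]
  show MonoidAlgebra.single (fA φ N a) (1:ℤ) • (0 : Mq φ N) + gamA φ N a q = gamA φ N a q
  rw [smul_zero, zero_add]

lemma Gam_of_false (hφ : ∀ b, Function.Injective (φ b)) (hNC : N ⊓ (φ true).range = ⊥)
    (b : K false) (q : Qq φ N) :
    Gam φ N hφ hNC (Monoid.PushoutI.of false b) q = gamB φ N b q := by
  unfold Gam
  rw [tauG_of_false]
  show MonoidAlgebra.single (fB φ N b) (1:ℤ) • (0 : Mq φ N) + gamB φ N b q = gamB φ N b q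
  rw [smul_zero, zero_add]

lemma tau_affine (hφ : ∀ b, Function.Injective (φ b)) (hNC : N ⊓ (φ true).range = ⊥)
    (g : Monoid.PushoutI φ) : ∀ p : Mq φ N × Qq φ N,
    tauG φ N hφ hNC g p =
      (MonoidAlgebra.single (pr φ N g) (1:ℤ) • p.1 + Gam φ N hφ hNC g p.2, pr φ N g * p.2) := by
  have keyA : ∀ (a : K true) (p : Mq φ N × Qq φ N),
      tauG φ N hφ hNC (Monoid.PushoutI.of true a) p =
        (MonoidAlgebra.single (pr φ N (Monoid.PushoutI.of true a)) (1:ℤ) • p.1 +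
          Gam φ N hφ hNC (Monoid.PushoutI.of true a) p.2,
          pr φ N (Monoid.PushoutI.of true a) * p.2) := by
    intro a p
    rw [tauG_of_true, Gam_of_true]
    rfl
  induction g using Monoid.PushoutI.induction_on with
  | of i a =>
    cases i
    · intro p
      rw [tauG_of_false, Gam_of_false]
      rfl
    · exact keyA a
  | base h =>
    rw [← Monoid.PushoutI.of_apply_eq_base (φ := φ) true h]
    exact keyA (φ true h)
  | mul x y ihx ihy =>
    intro p
    have hmulapp : ∀ p' : Mq φ N × Qq φ N, tauG φ N hφ hNC (x * y) p' =
        tauG φ N hφ hNC x (tauG φ N hφ hNC y p') := by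
      intro p'
      rw [map_mul]
      rfl
    have hG : Gam φ N hφ hNC (x * y) p.2 =
        MonoidAlgebra.single (pr φ N x) (1:ℤ) • Gam φ N hφ hNC y p.2 +
          Gam φ N hφ hNC x (pr φ N y * p.2) := by
      show (tauG φ N hφ hNC (x * y) (0, p.2)).1 = _
      rw [hmulapp (0, p.2), ihy (0, p.2), ihx _]
      show MonoidAlgebra.single (pr φ N x) (1:ℤ) •
          (MonoidAlgebra.single (pr φ N y) (1:ℤ) • (0 : Mq φ N) +
            Gam φ N hφ hNC y p.2) + Gam φ N hφ hNC x (pr φ N y * p.2) = _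
      rw [smul_zero, zero_add]
    rw [hmulapp p, ihy p, ihx _]
    simp only [Prod.mk.injEq]
    refine ⟨?_, ?_⟩
    · rw [hG, smul_add, smul_smul, MonoidAlgebra.single_mul_single, one_mul, ← map_mul]
      abel
    · rw [map_mul, mul_assoc]

lemma Gam_mul (hφ : ∀ b, Function.Injective (φ b)) (hNC : N ⊓ (φ true).range = ⊥)
    (g g' : Monoid.PushoutI φ) (q : Qq φ N) :
    Gam φ N hφ hNC (g * g') q =
      MonoidAlgebra.single (pr φ N g) (1:ℤ) • Gam φ N hφ hNC g' q +
        Gam φ N hφ hNC g (pr φ N g' * q) := by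
  show (tauG φ N hφ hNC (g * g') (0, q)).1 = _
  have hmulapp : tauG φ N hφ hNC (g * g') (0, q) =
      tauG φ N hφ hNC g (tauG φ N hφ hNC g' (0, q)) := by
    rw [map_mul]
    rfl
  rw [hmulapp, tau_affine φ N hφ hNC g' (0, q), tau_affine φ N hφ hNC g _]
  show MonoidAlgebra.single (pr φ N g) (1:ℤ) •
      (MonoidAlgebra.single (pr φ N g') (1:ℤ) • (0 : Mq φ N) + Gam φ N hφ hNC g' q) +
      Gam φ N hφ hNC g (pr φ N g' * q) = _
  rw [smul_zero, zero_add]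

lemma Gam_one (hφ : ∀ b, Function.Injective (φ b)) (hNC : N ⊓ (φ true).range = ⊥)
    (q : Qq φ N) : Gam φ N hφ hNC 1 q = 0 := by
  show (tauG φ N hφ hNC 1 (0, q)).1 = 0
  rw [map_one]
  rfl

lemma Gam_inv_cancel (hφ : ∀ b, Function.Injective (φ b)) (hNC : N ⊓ (φ true).range = ⊥)
    (g : Monoid.PushoutI φ) (q : Qq φ N) :
    MonoidAlgebra.single (pr φ N g) (1:ℤ) • Gam φ N hφ hNC g⁻¹ q +
      Gam φ N hφ hNC g (pr φ N g⁻¹ * q) = 0 := by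
  have h := Gam_mul φ N hφ hNC g g⁻¹ q
  rw [mul_inv_cancel, Gam_one] at h
  exact h.symm

lemma pr_jn (n : N) : pr φ N (Monoid.PushoutI.of true (n : K true)) = 1 :=
  (QuotientGroup.eq_one_iff _).2 (jn_mem_KK φ N n)

lemma Gam_jn (hφ : ∀ b, Function.Injective (φ b)) (hNC : N ⊓ (φ true).range = ⊥)
    (n : N) (q : Qq φ N) :
    Gam φ N hφ hNC (Monoid.PushoutI.of true (n : K true)) q = epsN φ N n := by
  rw [Gam_of_true, gamA_n]

lemma Gam_conj_gen (hφ : ∀ b, Function.Injective (φ b)) (hNC : N ⊓ (φ true).range = ⊥)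
    (g : Monoid.PushoutI φ) (n : N) (q : Qq φ N) :
    Gam φ N hφ hNC (g * (Monoid.PushoutI.of true (n : K true) * g⁻¹)) q =
      MonoidAlgebra.single (pr φ N g) (1:ℤ) • epsN φ N n := by
  have h2 : pr φ N (Monoid.PushoutI.of true (n : K true) * g⁻¹) = pr φ N g⁻¹ := by
    rw [map_mul, pr_jn, one_mul]
  rw [Gam_mul φ N hφ hNC g _ q, Gam_mul φ N hφ hNC _ g⁻¹ q, pr_jn, Gam_jn, h2,
    show MonoidAlgebra.single (1 : Qq φ N) (1:ℤ) = 1 from (MonoidAlgebra.one_def).symm,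
    one_smul, smul_add, add_right_comm, Gam_inv_cancel φ N hφ hNC g q, zero_add]

lemma Gam_const (hφ : ∀ b, Function.Injective (φ b)) (hNC : N ⊓ (φ true).range = ⊥)
    {g : Monoid.PushoutI φ} (hg : g ∈ KK φ N) :
    ∀ q q', Gam φ N hφ hNC g q = Gam φ N hφ hNC g q' := by
  refine Subgroup.closure_induction
    (p := fun g _ => ∀ q q', Gam φ N hφ hNC g q = Gam φ N hφ hNC g q') ?_ ?_ ?_ ?_ hg
  · intro x hx
    obtain ⟨a, ha, hconj⟩ := Group.mem_conjugatesOfSet_iff.1 hx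
    obtain ⟨n, hn, rfl⟩ := Subgroup.mem_map.1 ha
    obtain ⟨c, hc⟩ := isConj_iff.1 hconj
    intro q q'
    rw [← hc, mul_assoc, Gam_conj_gen φ N hφ hNC c ⟨n, hn⟩ q,
      Gam_conj_gen φ N hφ hNC c ⟨n, hn⟩ q']
  · intro q q'
    rw [Gam_one, Gam_one]
  · intro x y _ _ px py q q'
    rw [Gam_mul φ N hφ hNC x y q, Gam_mul φ N hφ hNC x y q', py q q',
      px (pr φ N y * q) (pr φ N y * q')]
  · intro x _ px q q'
    have hcan : ∀ z : Mq φ N, MonoidAlgebra.single ((pr φ N x)⁻¹) (1:ℤ) •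
        (MonoidAlgebra.single (pr φ N x) (1:ℤ) • z) = z := by
      intro z
      rw [smul_smul, MonoidAlgebra.single_mul_single, one_mul, inv_mul_cancel,
        show MonoidAlgebra.single (1 : Qq φ N) (1:ℤ) = 1 from (MonoidAlgebra.one_def).symm,
        one_smul]
    have h1 := Gam_inv_cancel φ N hφ hNC x q
    have h2 := Gam_inv_cancel φ N hφ hNC x q'
    rw [px (pr φ N x⁻¹ * q) (pr φ N x⁻¹ * q')] at h1
    have h4 : MonoidAlgebra.single (pr φ N x) (1:ℤ) • Gam φ N hφ hNC x⁻¹ q =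
        MonoidAlgebra.single (pr φ N x) (1:ℤ) • Gam φ N hφ hNC x⁻¹ q' :=
      add_right_cancel (h1.trans h2.symm)
    calc Gam φ N hφ hNC x⁻¹ q
        = MonoidAlgebra.single ((pr φ N x)⁻¹) (1:ℤ) •
            (MonoidAlgebra.single (pr φ N x) (1:ℤ) • Gam φ N hφ hNC x⁻¹ q) := (hcan _).symm
      _ = MonoidAlgebra.single ((pr φ N x)⁻¹) (1:ℤ) •
            (MonoidAlgebra.single (pr φ N x) (1:ℤ) • Gam φ N hφ hNC x⁻¹ q') := by rw [h4]
      _ = Gam φ N hφ hNC x⁻¹ q' := hcan _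

end Act

section Psi

variable {C : Type*} [Group C] {K : Bool → Type*} [∀ b, Group (K b)]
  (φ : ∀ b, C →* K b) (N : Subgroup (K true)) [N.Normal]

lemma KKmem_conj (g : Monoid.PushoutI φ) (x : ↥(KK φ N)) : g * ↑x * g⁻¹ ∈ KK φ N :=
  Subgroup.Normal.conj_mem inferInstance _ x.2 g

lemma ab_of_congr {x y : ↥(KK φ N)} (h : (x : Monoid.PushoutI φ) = y) :
    Abelianization.of x = Abelianization.of y := by
  cases Subtype.ext h
  rfl

lemma ab_conj (k x : ↥(KK φ N)) :
    Abelianization.of (k * x * k⁻¹) = Abelianization.of x := by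
  rw [map_mul, map_mul, map_inv, mul_comm (Abelianization.of k), mul_inv_cancel_right]

lemma ab_conj_map (g : Monoid.PushoutI φ) (x : ↥(KK φ N)) :
    Abelianization.map (MulAut.conjNormal g).toMonoidHom (Abelianization.of x) =
      Abelianization.of (⟨g * ↑x * g⁻¹, KKmem_conj φ N g x⟩ : ↥(KK φ N)) := by
  rw [Abelianization.map_of]
  apply ab_of_congr
  simp [MulAut.conjNormal_apply]

lemma ab_congr_of_pr {s g : Monoid.PushoutI φ} (hsg : pr φ N s = pr φ N g) (x : ↥(KK φ N))
    (m1 : s * ↑x * s⁻¹ ∈ KK φ N) (m2 : g * ↑x * g⁻¹ ∈ KK φ N) :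
    Abelianization.of (⟨s * ↑x * s⁻¹, m1⟩ : ↥(KK φ N)) =
      Abelianization.of (⟨g * ↑x * g⁻¹, m2⟩ : ↥(KK φ N)) := by
  have hk : g⁻¹ * s ∈ KK φ N := by
    apply (QuotientGroup.eq_one_iff _).1
    show pr φ N (g⁻¹ * s) = 1
    rw [map_mul, map_inv, hsg, inv_mul_cancel]
  have hmid : (⟨s * ↑x * s⁻¹, m1⟩ : ↥(KK φ N)) =
      ⟨g * ↑((⟨g⁻¹ * s, hk⟩ : ↥(KK φ N)) * x * (⟨g⁻¹ * s, hk⟩ : ↥(KK φ N))⁻¹) * g⁻¹,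
        KKmem_conj φ N g _⟩ := by
    apply Subtype.ext
    show s * ↑x * s⁻¹ = g * ((g⁻¹ * s) * ↑x * (g⁻¹ * s)⁻¹) * g⁻¹
    group
  rw [hmid, ← ab_conj_map, ab_conj, ab_conj_map]

/-- Conjugation action of `G` on the abelianization of `KK`, additively. -/
noncomputable def rho (g : Monoid.PushoutI φ) :
    Additive (Abelianization ↥(KK φ N)) →+ Additive (Abelianization ↥(KK φ N)) :=
  MonoidHom.toAdditive (Abelianization.map (MulAut.conjNormal g).toMonoidHom)

lemma rho_of (g : Monoid.PushoutI φ) (x : ↥(KK φ N)) :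
    rho φ N g (Additive.ofMul (Abelianization.of x)) =
      Additive.ofMul (Abelianization.of (⟨g * ↑x * g⁻¹, KKmem_conj φ N g x⟩ : ↥(KK φ N))) := by
  show Additive.ofMul (Abelianization.map (MulAut.conjNormal g).toMonoidHom
    (Abelianization.of x)) = _
  rw [ab_conj_map]

/-- Section of `G → Q`. -/
noncomputable def sQ (q : Qq φ N) : Monoid.PushoutI φ := Quotient.out q

lemma pr_sQ (q : Qq φ N) : pr φ N (sQ φ N q) = q := QuotientGroup.out_eq' q

lemma sjn_mem (q : Qq φ N) (n : ↥N) :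
    sQ φ N q * Monoid.PushoutI.of true (n : K true) * (sQ φ N q)⁻¹ ∈ KK φ N :=
  Subgroup.Normal.conj_mem inferInstance _ (jn_mem_KK φ N n) _

/-- the conjugated copy of `N` inside `Rel(G,KK)`. -/
noncomputable def cN (q : Qq φ N) : ↥N →* Abelianization ↥(KK φ N) :=
  MonoidHom.mk' (fun n => Abelianization.of
    ⟨sQ φ N q * Monoid.PushoutI.of true (n : K true) * (sQ φ N q)⁻¹, sjn_mem φ N q n⟩)
    (by
      intro n n'
      rw [← map_mul]
      apply ab_of_congr
      show sQ φ N q * Monoid.PushoutI.of true ((n * n' : ↥N) : K true) * (sQ φ N q)⁻¹ =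
        (sQ φ N q * Monoid.PushoutI.of true (n : K true) * (sQ φ N q)⁻¹) *
          (sQ φ N q * Monoid.PushoutI.of true (n' : K true) * (sQ φ N q)⁻¹)
      rw [Subgroup.coe_mul, map_mul]
      group)

/-- `homQ q` : Rel(A,N) → Rel(G,KK),  `n ↦ s(q) n s(q)⁻¹`. -/
noncomputable def homQ (q : Qq φ N) :
    AbN N →+ Additive (Abelianization ↥(KK φ N)) :=
  MonoidHom.toAdditive (Abelianization.lift (cN φ N q))

lemma homQ_of (q : Qq φ N) (n : ↥N) :
    homQ φ N q (Additive.ofMul (Abelianization.of n)) =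
      Additive.ofMul (Abelianization.of
        (⟨sQ φ N q * Monoid.PushoutI.of true (n : K true) * (sQ φ N q)⁻¹,
          sjn_mem φ N q n⟩ : ↥(KK φ N))) := by
  show Additive.ofMul (Abelianization.lift (cN φ N q) (Abelianization.of n)) = _
  rw [Abelianization.lift_apply_of]
  rfl

lemma abn_surj (m : AbN N) : ∃ n : ↥N, m = Additive.ofMul (Abelianization.of n) := by
  have h : ∀ y : Abelianization ↥N, ∃ n : ↥N, y = Abelianization.of n := by
    intro y
    induction y using QuotientGroup.induction_on with
    | H z => exact ⟨z, rfl⟩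
  obtain ⟨n, hn⟩ := h (Additive.toMul m)
  exact ⟨n, by rw [← hn]; rfl⟩

/-- φ₀ : ℤQ ⊗ Rel(A,N) → Rel(G,KK). -/
noncomputable def phi0 : M0 φ N →ₗ[ℤ] Additive (Abelianization ↥(KK φ N)) :=
  TensorProduct.lift (Finsupp.lsum ℤ (fun q =>
    LinearMap.toSpanSingleton ℤ _ ((homQ φ N q).toIntLinearMap)) ∘ₗ
      (MonoidAlgebra.coeffLinearEquiv ℤ).toLinearMap)

lemma phi0_single (q : Qq φ N) (c : ℤ) (m : AbN N) :
    phi0 φ N (MonoidAlgebra.single q c ⊗ₜ[ℤ] m) = c • homQ φ N q m := by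
  unfold phi0
  erw [TensorProduct.lift.tmul, LinearMap.comp_apply]
  erw [Finsupp.lsum_single, LinearMap.toSpanSingleton_apply]
  rfl

end Psi

section Psi2

variable {C : Type*} [Group C] {K : Bool → Type*} [∀ b, Group (K b)]
  (φ : ∀ b, C →* K b) (N : Subgroup (K true)) [N.Normal]

lemma homQ_mul (q0 q : Qq φ N) (m : AbN N) :
    homQ φ N (q0 * q) m = rho φ N (sQ φ N q0) (homQ φ N q m) := by
  obtain ⟨n, rfl⟩ := abn_surj N m
  rw [homQ_of, homQ_of, rho_of]
  refine congrArg Additive.ofMul ?_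
  have step1 := ab_congr_of_pr φ N (s := sQ φ N (q0 * q)) (g := sQ φ N q0 * sQ φ N q)
    (by rw [pr_sQ, map_mul, pr_sQ, pr_sQ])
    (⟨Monoid.PushoutI.of true (n : K true), jn_mem_KK φ N n⟩ : ↥(KK φ N))
    (sjn_mem φ N (q0 * q) n) (KKmem_conj φ N _ _)
  rw [step1]
  apply ab_of_congr
  show (sQ φ N q0 * sQ φ N q) * Monoid.PushoutI.of true (n : K true) *
      (sQ φ N q0 * sQ φ N q)⁻¹ =
    sQ φ N q0 * (sQ φ N q * Monoid.PushoutI.of true (n : K true) * (sQ φ N q)⁻¹) *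
      (sQ φ N q0)⁻¹
  group

lemma homQ_rel (q : Qq φ N) (h : K true) (m : AbN N) :
    homQ φ N (q * fA φ N h) m = homQ φ N q (cj N h m) := by
  obtain ⟨n, rfl⟩ := abn_surj N m
  rw [homQ_of, cj_of, homQ_of]
  refine congrArg Additive.ofMul ?_
  have step1 := ab_congr_of_pr φ N (s := sQ φ N (q * fA φ N h))
    (g := sQ φ N q * Monoid.PushoutI.of true h)
    (by rw [pr_sQ, map_mul, pr_sQ]; rfl)
    (⟨Monoid.PushoutI.of true (n : K true), jn_mem_KK φ N n⟩ : ↥(KK φ N))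
    (sjn_mem φ N (q * fA φ N h) n) (KKmem_conj φ N _ _)
  rw [step1]
  apply ab_of_congr
  show (sQ φ N q * Monoid.PushoutI.of true h) * Monoid.PushoutI.of true (n : K true) *
      (sQ φ N q * Monoid.PushoutI.of true h)⁻¹ =
    sQ φ N q * Monoid.PushoutI.of true (((⟨h * ↑n * h⁻¹, (‹N.Normal›).conj_mem ↑n n.2 h⟩ : ↥N))
      : K true) * (sQ φ N q)⁻¹
  show _ = sQ φ N q * Monoid.PushoutI.of true (h * ↑n * h⁻¹) * (sQ φ N q)⁻¹
  rw [map_mul, map_mul, map_inv]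
  group

lemma phi0_rel (a : MonoidAlgebra ℤ (Qq φ N)) (h : K true) (m : AbN N) :
    phi0 φ N ((a * MonoidAlgebra.of ℤ (Qq φ N) (fA φ N h)) ⊗ₜ[ℤ] m) =
      phi0 φ N (a ⊗ₜ[ℤ] cj N h m) := by
  induction a using MonoidAlgebra.induction_linear with
  | zero => simp only [zero_mul, TensorProduct.zero_tmul]
  | add f g hf hg => simp only [add_mul, TensorProduct.add_tmul, map_add, hf, hg]
  | single q c =>
    show phi0 φ N ((MonoidAlgebra.single q c * MonoidAlgebra.of ℤ (Qq φ N) (fA φ N h))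
        ⊗ₜ[ℤ] m) = phi0 φ N (MonoidAlgebra.single q c ⊗ₜ[ℤ] cj N h m)
    rw [MonoidAlgebra.of_apply, MonoidAlgebra.single_mul_single, mul_one, phi0_single,
      phi0_single, homQ_rel]
lemma phi0_smul_single (q0 : Qq φ N) (z : M0 φ N) :
    phi0 φ N (MonoidAlgebra.single q0 (1:ℤ) • z) = rho φ N (sQ φ N q0) (phi0 φ N z) := by
  induction z using TensorProduct.induction_on with
  | zero => simp only [smul_zero, map_zero]
  | add x y hx hy => simp only [smul_add, map_add, hx, hy]
  | tmul a m =>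
    induction a using MonoidAlgebra.induction_linear with
    | zero => simp only [TensorProduct.zero_tmul, smul_zero, map_zero]
    | add f g hf hg => simp only [TensorProduct.add_tmul, smul_add, map_add, hf, hg]
    | single q c =>
      show phi0 φ N (MonoidAlgebra.single q0 (1:ℤ) • (MonoidAlgebra.single q c ⊗ₜ[ℤ] m)) =
        rho φ N (sQ φ N q0) (phi0 φ N (MonoidAlgebra.single q c ⊗ₜ[ℤ] m))
      rw [smulM0, MonoidAlgebra.single_mul_single, one_mul, phi0_single, phi0_single,
        map_zsmul, homQ_mul]

lemma phi0_smul_zero (r : MonoidAlgebra ℤ (Qq φ N)) (z : M0 φ N) (hz : phi0 φ N z = 0) :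
    phi0 φ N (r • z) = 0 := by
  induction r using MonoidAlgebra.induction_linear with
  | zero => rw [zero_smul, map_zero]
  | add f g hf hg => rw [add_smul, map_add, hf, hg, add_zero]
  | single q c =>
    have h1 : (MonoidAlgebra.single q c : MonoidAlgebra ℤ (Qq φ N)) =
        c • MonoidAlgebra.single q (1:ℤ) := by
      rw [MonoidAlgebra.smul_single', mul_one]
    show phi0 φ N (MonoidAlgebra.single q c • z) = 0
    rw [h1, smul_assoc, map_smul, phi0_smul_single, hz, map_zero, smul_zero]

lemma phi0_vanish : ∀ x ∈ relSub (Qq φ N) (K true) N (fA φ N), phi0 φ N x = 0 := by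
  intro x hx
  refine Submodule.span_induction ?_ ?_ ?_ ?_ hx
  · rintro y ⟨a, h, m, rfl⟩
    rw [map_sub, sub_eq_zero]
    exact phi0_rel φ N a h m
  · exact map_zero _
  · intro y z _ _ hy hz
    rw [map_add, hy, hz, add_zero]
  · intro r y _ hy
    exact phi0_smul_zero φ N r y hy

/-- The descended map `M → Rel(G,KK)`. -/
noncomputable def phiM : Mq φ N →ₗ[ℤ] Additive (Abelianization ↥(KK φ N)) :=
  (Submodule.liftQ ((relSub (Qq φ N) (K true) N (fA φ N)).restrictScalars ℤ) (phi0 φ N)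
    (fun x hx => LinearMap.mem_ker.2 (phi0_vanish φ N x hx))).comp
    ((Submodule.Quotient.restrictScalarsEquiv ℤ
      (relSub (Qq φ N) (K true) N (fA φ N))).symm.toLinearMap)

lemma phiM_mk (z : M0 φ N) : phiM φ N (mkM φ N z) = phi0 φ N z := by
  unfold phiM
  rw [LinearMap.comp_apply]
  rw [show mkM φ N z = Submodule.Quotient.mk z from rfl]
  rw [LinearEquiv.coe_toLinearMap, Submodule.Quotient.restrictScalarsEquiv_symm_mk]
  exact Submodule.liftQ_apply _ _ _

end Psi2

section Final

variable {C : Type*} [Group C] {K : Bool → Type*} [∀ b, Group (K b)]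
  (φ : ∀ b, C →* K b) (N : Subgroup (K true)) [N.Normal]

/-- ψ₀ on the subgroup. -/
noncomputable def psi0 (hφ : ∀ b, Function.Injective (φ b)) (hNC : N ⊓ (φ true).range = ⊥) :
    ↥(KK φ N) →* Multiplicative (Mq φ N) :=
  MonoidHom.mk' (fun k => Multiplicative.ofAdd (Gam φ N hφ hNC (k : Monoid.PushoutI φ) 1))
    (by
      intro k k'
      have h := Gam_mul φ N hφ hNC (k : Monoid.PushoutI φ) (k' : Monoid.PushoutI φ) 1
      have hk : pr φ N (k : Monoid.PushoutI φ) = 1 := (QuotientGroup.eq_one_iff _).2 k.2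
      have hk' : pr φ N (k' : Monoid.PushoutI φ) = 1 := (QuotientGroup.eq_one_iff _).2 k'.2
      rw [hk, hk', one_mul,
        show MonoidAlgebra.single (1 : Qq φ N) (1:ℤ) = 1 from (MonoidAlgebra.one_def).symm,
        one_smul] at h
      show Multiplicative.ofAdd
          (Gam φ N hφ hNC ((k : Monoid.PushoutI φ) * (k' : Monoid.PushoutI φ)) 1) = _
      rw [h, add_comm]
      rfl)

/-- ψ : Rel(G, KK) → M. -/
noncomputable def psi (hφ : ∀ b, Function.Injective (φ b)) (hNC : N ⊓ (φ true).range = ⊥) :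
    Additive (Abelianization ↥(KK φ N)) →+ Mq φ N :=
  MonoidHom.toAdditiveLeft (Abelianization.lift (psi0 φ N hφ hNC))

lemma psi_of (hφ : ∀ b, Function.Injective (φ b)) (hNC : N ⊓ (φ true).range = ⊥)
    (k : ↥(KK φ N)) :
    psi φ N hφ hNC (Additive.ofMul (Abelianization.of k)) =
      Gam φ N hφ hNC (k : Monoid.PushoutI φ) 1 := by
  show Multiplicative.toAdd (Abelianization.lift (psi0 φ N hφ hNC) (Abelianization.of k)) = _
  rw [Abelianization.lift_apply_of]
  rfl

lemma abk_surj (x : Additive (Abelianization ↥(KK φ N))) :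
    ∃ k : ↥(KK φ N), x = Additive.ofMul (Abelianization.of k) := by
  have h : ∀ y : Abelianization ↥(KK φ N), ∃ k : ↥(KK φ N), y = Abelianization.of k := by
    intro y
    induction y using QuotientGroup.induction_on with
    | H z => exact ⟨z, rfl⟩
  obtain ⟨k, hk⟩ := h (Additive.toMul x)
  exact ⟨k, by rw [← hk]; rfl⟩

lemma Gam_conj_s (hφ : ∀ b, Function.Injective (φ b)) (hNC : N ⊓ (φ true).range = ⊥)
    (q : Qq φ N) (n : ↥N) :
    Gam φ N hφ hNC (sQ φ N q * Monoid.PushoutI.of true (n : K true) * (sQ φ N q)⁻¹) 1 =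
      MonoidAlgebra.single q (1:ℤ) • epsN φ N n := by
  rw [show sQ φ N q * Monoid.PushoutI.of true (n : K true) * (sQ φ N q)⁻¹ =
    sQ φ N q * (Monoid.PushoutI.of true (n : K true) * (sQ φ N q)⁻¹) from mul_assoc _ _ _]
  rw [Gam_conj_gen φ N hφ hNC (sQ φ N q) n 1, pr_sQ]

lemma mkM_single_of (q : Qq φ N) (c : ℤ) (n : ↥N) :
    mkM φ N (MonoidAlgebra.single q c ⊗ₜ[ℤ] Additive.ofMul (Abelianization.of n)) =
      c • (MonoidAlgebra.single q (1:ℤ) • epsN φ N n) := by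
  unfold epsN
  rw [smulMq, MonoidAlgebra.single_mul_single, one_mul, mul_one]
  rw [show (MonoidAlgebra.single q c : MonoidAlgebra ℤ (Qq φ N)) =
      c • MonoidAlgebra.single q (1:ℤ) by
    rw [MonoidAlgebra.smul_single', mul_one]]
  rw [← TensorProduct.smul_tmul', map_zsmul]

lemma psi_phi0 (hφ : ∀ b, Function.Injective (φ b)) (hNC : N ⊓ (φ true).range = ⊥)
    (z : M0 φ N) : psi φ N hφ hNC (phi0 φ N z) = mkM φ N z := by
  induction z using TensorProduct.induction_on with
  | zero => simp only [map_zero]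
  | add x y hx hy => simp only [map_add, hx, hy]
  | tmul a m =>
    obtain ⟨n, rfl⟩ := abn_surj N m
    induction a using MonoidAlgebra.induction_linear with
    | zero => simp only [TensorProduct.zero_tmul, map_zero]
    | add f g hf hg => simp only [TensorProduct.add_tmul, map_add, hf, hg]
    | single q c =>
      show psi φ N hφ hNC (phi0 φ N (MonoidAlgebra.single q c ⊗ₜ[ℤ]
        Additive.ofMul (Abelianization.of n))) = _
      rw [phi0_single, homQ_of, map_zsmul, psi_of, Gam_conj_s φ N hφ hNC q n,
        mkM_single_of]

lemma phi_psi (hφ : ∀ b, Function.Injective (φ b)) (hNC : N ⊓ (φ true).range = ⊥)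
    {g : Monoid.PushoutI φ} (hg : g ∈ KK φ N) :
    phiM φ N (Gam φ N hφ hNC g 1) =
      Additive.ofMul (Abelianization.of (⟨g, hg⟩ : ↥(KK φ N))) := by
  refine Subgroup.closure_induction
    (p := fun g hg => phiM φ N (Gam φ N hφ hNC g 1) =
      Additive.ofMul (Abelianization.of (⟨g, hg⟩ : ↥(KK φ N)))) ?_ ?_ ?_ ?_ hg
  · intro x hx
    obtain ⟨a, ha, hconj⟩ := Group.mem_conjugatesOfSet_iff.1 hx
    obtain ⟨n, hn, rfl⟩ := Subgroup.mem_map.1 ha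
    obtain ⟨c, hc⟩ := isConj_iff.1 hconj
    subst hc
    have h1 : phiM φ N (Gam φ N hφ hNC
        (c * (Monoid.PushoutI.of true n * c⁻¹)) 1) =
        Additive.ofMul (Abelianization.of
          (⟨sQ φ N (pr φ N c) * Monoid.PushoutI.of true (((⟨n, hn⟩ : ↥N)) : K true) *
            (sQ φ N (pr φ N c))⁻¹, sjn_mem φ N (pr φ N c) ⟨n, hn⟩⟩ : ↥(KK φ N))) := by
      rw [Gam_conj_gen φ N hφ hNC c ⟨n, hn⟩ 1]
      rw [show MonoidAlgebra.single (pr φ N c) (1:ℤ) • epsN φ N ⟨n, hn⟩ =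
          mkM φ N (MonoidAlgebra.single (pr φ N c) (1:ℤ) ⊗ₜ[ℤ]
            Additive.ofMul (Abelianization.of (⟨n, hn⟩ : ↥N))) by
        unfold epsN
        rw [smulMq, MonoidAlgebra.single_mul_single, one_mul, mul_one]]
      rw [phiM_mk, phi0_single, one_smul, homQ_of]
    have h2 := ab_congr_of_pr φ N (s := sQ φ N (pr φ N c)) (g := c) (pr_sQ φ N (pr φ N c))
      (⟨Monoid.PushoutI.of true (((⟨n, hn⟩ : ↥N)) : K true), jn_mem_KK φ N ⟨n, hn⟩⟩ :
        ↥(KK φ N))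
      (sjn_mem φ N (pr φ N c) ⟨n, hn⟩)
      (Subgroup.Normal.conj_mem inferInstance _ (jn_mem_KK φ N ⟨n, hn⟩) c)
    conv_lhs => rw [mul_assoc]
    rw [h1]
    exact congrArg Additive.ofMul h2
  · calc phiM φ N (Gam φ N hφ hNC 1 1) = 0 := by rw [Gam_one, map_zero]
    _ = Additive.ofMul (Abelianization.of (1 : ↥(KK φ N))) := by rw [map_one, ofMul_one]
    _ = _ := rfl
  · intro x y hx hy px py
    have hpx : pr φ N x = 1 := (QuotientGroup.eq_one_iff _).2 hx
    have hpy : pr φ N y = 1 := (QuotientGroup.eq_one_iff _).2 hy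
    have h := Gam_mul φ N hφ hNC x y 1
    rw [hpx, hpy, one_mul,
      show MonoidAlgebra.single (1 : Qq φ N) (1:ℤ) = 1 from (MonoidAlgebra.one_def).symm,
      one_smul] at h
    rw [h, map_add, px, py, ← ofMul_mul, mul_comm, ← map_mul]
    rfl
  · intro x hx px
    have hpx : pr φ N x = 1 := (QuotientGroup.eq_one_iff _).2 hx
    have h := Gam_inv_cancel φ N hφ hNC x 1
    rw [hpx, map_inv, hpx, inv_one, one_mul,
      show MonoidAlgebra.single (1 : Qq φ N) (1:ℤ) = 1 from (MonoidAlgebra.one_def).symm,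
      one_smul] at h
    have h2 : Gam φ N hφ hNC x⁻¹ 1 = - Gam φ N hφ hNC x 1 :=
      eq_neg_of_add_eq_zero_left h
    rw [h2, map_neg, px, ← ofMul_inv, ← map_inv]
    rfl

lemma psi_inter (hφ : ∀ b, Function.Injective (φ b)) (hNC : N ⊓ (φ true).range = ⊥)
    (g : Monoid.PushoutI φ) (x : Additive (Abelianization ↥(KK φ N))) :
    psi φ N hφ hNC (Additive.ofMul ((Abelianization.map (MulAut.conjNormal g).toMonoidHom)
      (Additive.toMul x))) =
      MonoidAlgebra.of ℤ (Qq φ N) (QuotientGroup.mk g) • psi φ N hφ hNC x := by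
  obtain ⟨k, rfl⟩ := abk_surj φ N x
  rw [show Additive.toMul (Additive.ofMul (Abelianization.of k)) = Abelianization.of k
      from rfl, ab_conj_map, psi_of, psi_of]
  have hk : pr φ N (k : Monoid.PushoutI φ) = 1 := (QuotientGroup.eq_one_iff _).2 k.2
  have h2 := Gam_mul φ N hφ hNC (k : Monoid.PushoutI φ) g⁻¹ 1
  rw [hk, show MonoidAlgebra.single (1 : Qq φ N) (1:ℤ) = 1 from (MonoidAlgebra.one_def).symm,
    one_smul] at h2
  have h1 := Gam_mul φ N hφ hNC g ((k : Monoid.PushoutI φ) * g⁻¹) 1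
  have h3 : pr φ N ((k : Monoid.PushoutI φ) * g⁻¹) = pr φ N g⁻¹ := by
    rw [map_mul, hk, one_mul]
  rw [h3, h2] at h1
  have h4 : Gam φ N hφ hNC (k : Monoid.PushoutI φ) (pr φ N g⁻¹ * 1) =
      Gam φ N hφ hNC (k : Monoid.PushoutI φ) 1 := Gam_const φ N hφ hNC k.2 _ _
  rw [h4, smul_add, add_right_comm, Gam_inv_cancel φ N hφ hNC g 1, zero_add] at h1
  show Gam φ N hφ hNC (g * (k : Monoid.PushoutI φ) * g⁻¹) 1 = _
  rw [mul_assoc g (k : Monoid.PushoutI φ) g⁻¹, h1, MonoidAlgebra.of_apply]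
  rfl

/-- The isomorphism. -/
noncomputable def eIso (hφ : ∀ b, Function.Injective (φ b)) (hNC : N ⊓ (φ true).range = ⊥) :
    Additive (Abelianization ↥(KK φ N)) ≃+ Mq φ N where
  toFun := psi φ N hφ hNC
  invFun := phiM φ N
  left_inv x := by
    obtain ⟨k, rfl⟩ := abk_surj φ N x
    rw [psi_of, phi_psi φ N hφ hNC k.2]
  right_inv y := by
    obtain ⟨z, hz⟩ := Submodule.Quotient.mk_surjective _ y
    rw [← hz, show (Submodule.Quotient.mk z : Mq φ N) = mkM φ N z from rfl, phiM_mk, psi_phi0]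
  map_add' x y := map_add _ x y

end Final


end AmalgRel

/-- **The relative relation module of a Dehn filling of an amalgamated free product.**
Let `G = A ∗_C B` be an amalgamated free product of groups `A = K true` and `B = K false`
over a common group `C`, given by injective homomorphisms `φ b : C →* K b`. Let `N` be a
normal subgroup of `A` meeting the image of `C` trivially, `⟪N⟫` the normal closure of
(the image of) `N` in `G`, `Q = G/⟪N⟫` and `R = A/N`. Then
`Rel(G, ⟪N⟫) ≅ ℤQ ⊗_{ℤR} Rel(A, N)` as `ℤQ`-modules. -/
theorem amalgamated_relModule {C : Type*} [Group C] {K : Bool → Type*}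
    [∀ b, Group (K b)] (φ : ∀ b, C →* K b) (hφ : ∀ b, Function.Injective (φ b))
    (N : Subgroup (K true)) [N.Normal] (hNC : N ⊓ (φ true).range = ⊥) :
    RelModuleIsoInd (Monoid.PushoutI φ) (Monoid.PushoutI.of (φ := φ) true) N
      (Subgroup.normalClosure
        ((N.map (Monoid.PushoutI.of (φ := φ) true) : Subgroup (Monoid.PushoutI φ)) :
          Set (Monoid.PushoutI φ))) := by
  unfold RelModuleIsoInd
  exact ⟨AmalgRel.eIso φ N hφ hNC, fun g x => AmalgRel.psi_inter φ N hφ hNC g x⟩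
end

section
/- Let G = H∗_t be an HNN-extension of a group H with associated subgroups A, B ≤ H. If N is a normal subgroup of H with N ∩ A = {1} and N ∩ B = {1}, then H ∩ ⟪N⟫ = N, where ⟪N⟫ is the normal closure of N in G; equivalently, the natural homomorphism H/N → G/⟪N⟫ is injective. -/
/-- **Dehn filling of an HNN-extension is injective on the base group.**
Let `G = H∗_t` be the HNN-extension of a group `H` with associated subgroups `A, B ≤ H`
(given by an isomorphism `φ : A ≃* B`). If `N` is a normal subgroup of `H` with
`N ∩ A = {1}` and `N ∩ B = {1}`, then `H ∩ ⟪N⟫ = N` in `G` (with `H` and `N` regarded as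
subgroups of `G` via the canonical embedding); equivalently the natural homomorphism
`H/N → G/⟪N⟫` is injective. -/
theorem hnn_inf_normalClosure {H : Type*} [Group H] (A B : Subgroup H) (φ : A ≃* B)
    (N : Subgroup H) [N.Normal] (hA : N ⊓ A = ⊥) (hB : N ⊓ B = ⊥) :
    (MonoidHom.range (HNNExtension.of : H →* HNNExtension H A B φ)) ⊓
        Subgroup.normalClosure
          ((N.map (HNNExtension.of : H →* HNNExtension H A B φ)) :
            Set (HNNExtension H A B φ))
      = N.map (HNNExtension.of : H →* HNNExtension H A B φ) := by
  set mk : H →* H ⧸ N := QuotientGroup.mk' N with hmk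
  set A' : Subgroup (H ⧸ N) := A.map mk with hA'
  set B' : Subgroup (H ⧸ N) := B.map mk with hB'
  have injA : Function.Injective (mk.subgroupMap A) := by
    intro x y hxy
    have : mk (x : H) = mk (y : H) := congrArg Subtype.val hxy
    rw [QuotientGroup.mk'_eq_mk'] at this
    obtain ⟨z, hz, hz2⟩ := this
    have hzA : (x : H)⁻¹ * y ∈ A := by
      have := mul_mem (inv_mem x.2) y.2
      simpa using this
    have : (x : H) * z = y := hz2
    have hz' : z = (x : H)⁻¹ * y := by rw [← this]; group
    have : z ∈ N ⊓ A := ⟨hz, hz' ▸ hzA⟩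
    rw [hA] at this
    have hz1 : z = 1 := this
    ext
    rw [← hz2, hz1, mul_one]
  have injB : Function.Injective (mk.subgroupMap B) := by
    intro x y hxy
    have : mk (x : H) = mk (y : H) := congrArg Subtype.val hxy
    rw [QuotientGroup.mk'_eq_mk'] at this
    obtain ⟨z, hz, hz2⟩ := this
    have hzB : (x : H)⁻¹ * y ∈ B := by
      have := mul_mem (inv_mem x.2) y.2
      simpa using this
    have : (x : H) * z = y := hz2
    have hz' : z = (x : H)⁻¹ * y := by rw [← this]; group
    have : z ∈ N ⊓ B := ⟨hz, hz' ▸ hzB⟩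
    rw [hB] at this
    have hz1 : z = 1 := this
    ext
    rw [← hz2, hz1, mul_one]
  let eA : A ≃* A' := MulEquiv.ofBijective (mk.subgroupMap A)
    ⟨injA, mk.subgroupMap_surjective A⟩
  let eB : B ≃* B' := MulEquiv.ofBijective (mk.subgroupMap B)
    ⟨injB, mk.subgroupMap_surjective B⟩
  let φ' : A' ≃* B' := eA.symm.trans (φ.trans eB)
  have hcoeA : ∀ a : A, ((eA a : A') : H ⧸ N) = mk (a : H) := fun a => rfl
  have hcoeB : ∀ b : B, ((eB b : B') : H ⧸ N) = mk (b : H) := fun b => rfl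
  let of' : (H ⧸ N) →* HNNExtension (H ⧸ N) A' B' φ' := HNNExtension.of
  let ψ : HNNExtension H A B φ →* HNNExtension (H ⧸ N) A' B' φ' :=
    HNNExtension.lift (of'.comp mk) HNNExtension.t (by
      intro a
      have := HNNExtension.t_mul_of (φ := φ') (eA a)
      rw [hcoeA] at this
      have hφ : (φ' (eA a) : H ⧸ N) = mk (φ a : H) := by
        simp only [φ', MulEquiv.trans_apply, MulEquiv.symm_apply_apply]
        exact hcoeB (φ a)
      rw [hφ] at this
      simpa using this)
  have hψof : ∀ h : H, ψ (HNNExtension.of h) = of' (mk h) := by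
    intro h; simp [ψ, of']
  have key : ∀ h : H,
      HNNExtension.of h ∈ Subgroup.normalClosure
        ((N.map (HNNExtension.of : H →* HNNExtension H A B φ)) :
          Set (HNNExtension H A B φ)) → h ∈ N := by
    intro h hh
    have hle : Subgroup.normalClosure
        ((N.map (HNNExtension.of : H →* HNNExtension H A B φ)) :
          Set (HNNExtension H A B φ)) ≤ ψ.ker := by
      apply Subgroup.normalClosure_le_normal
      rintro x ⟨n, hn, rfl⟩
      have : mk n = 1 := (QuotientGroup.eq_one_iff n).2 hn
      simp [MonoidHom.mem_ker, hψof, this]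
    have h1 : ψ (HNNExtension.of h) = 1 := hle hh
    rw [hψof] at h1
    have h2 : mk h = 1 := HNNExtension.of_injective (φ := φ') (by simpa using h1)
    exact (QuotientGroup.eq_one_iff h).1 h2
  apply le_antisymm
  · rintro x ⟨⟨h, rfl⟩, hx⟩
    exact ⟨h, key h hx, rfl⟩
  · exact le_inf (Subgroup.map_le_range _ N)
      (fun x hx => Subgroup.subset_normalClosure hx)
end

section
/- Let G = H∗_t be an HNN-extension of a group H with associated subgroups A, B ≤ H. Suppose N is a normal subgroup of H with N ∩ A = {1} and N ∩ B = {1}. Let Q = G/⟪N⟫ and R = H/N, where R is identified with a subgroup of Q via the (injective) natural homomorphism. Then there is an isomorphism of ℤQ-modules Rel(G, ⟪N⟫) ≅ ℤQ ⊗_{ℤR} Rel(H, N). -/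
open scoped TensorProduct

set_option linter.unusedSectionVars false
set_option maxHeartbeats 1000000

noncomputable section

namespace RelAux

variable {H : Type*} [Group H] (A B : Subgroup H) (φ : A ≃* B)
    (N : Subgroup H) [N.Normal]

/-- K = normal closure of the image of N. -/
def K : Subgroup (HNNExtension H A B φ) :=
  Subgroup.normalClosure ((N.map (HNNExtension.of : H →* HNNExtension H A B φ)) : Set _)

instance : (K A B φ N).Normal := Subgroup.normalClosure_normal

/-- the projection G → Q -/
def pi : HNNExtension H A B φ →* HNNExtension H A B φ ⧸ K A B φ N :=
  QuotientGroup.mk' _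

lemma of_mem_K (n : H) (hn : n ∈ N) : HNNExtension.of n ∈ K A B φ N :=
  Subgroup.subset_normalClosure (Subgroup.mem_map_of_mem _ hn)

/-- the embedding j : R = H/N → Q -/
def j : H ⧸ N →* HNNExtension H A B φ ⧸ K A B φ N :=
  QuotientGroup.map N (K A B φ N) HNNExtension.of (fun n hn => of_mem_K A B φ N n hn)

lemma j_mk (h : H) : j A B φ N (QuotientGroup.mk h) = pi A B φ N (HNNExtension.of h) := rfl

-- restriction of mk' N to A and B
def rA : ↥A →* H ⧸ N := (QuotientGroup.mk' N).comp A.subtype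
def rB : ↥B →* H ⧸ N := (QuotientGroup.mk' N).comp B.subtype

lemma sub_injective (C : Subgroup H) (hC : N ⊓ C = ⊥) :
    Function.Injective ((QuotientGroup.mk' N).comp C.subtype) := by
  rw [← MonoidHom.ker_eq_bot_iff, eq_bot_iff]
  intro a ha
  simp only [MonoidHom.mem_ker, MonoidHom.comp_apply] at ha
  have ha' : (a : H) ∈ N := (QuotientGroup.eq_one_iff _).1 ha
  have : (a : H) ∈ N ⊓ C := Subgroup.mem_inf.2 ⟨ha', a.2⟩
  rw [hC, Subgroup.mem_bot] at this
  exact Subgroup.mem_bot.2 (Subtype.ext this)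

def eA (hA : N ⊓ A = ⊥) : ↥A ≃* ↥(rA A N).range :=
  MulEquiv.ofBijective (rA A N).rangeRestrict
    ⟨fun x y hxy => sub_injective N A hA (by
        have := congrArg Subtype.val hxy
        exact this),
      (rA A N).rangeRestrict_surjective⟩

def eB (hB : N ⊓ B = ⊥) : ↥B ≃* ↥(rB B N).range :=
  MulEquiv.ofBijective (rB B N).rangeRestrict
    ⟨fun x y hxy => sub_injective N B hB (by
        have := congrArg Subtype.val hxy
        exact this),
      (rB B N).rangeRestrict_surjective⟩

def phibar (hA : N ⊓ A = ⊥) (hB : N ⊓ B = ⊥) : ↥(rA A N).range ≃* ↥(rB B N).range :=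
  ((eA A N hA).symm.trans φ).trans (eB B N hB)

/-- Q' : the HNN extension of R -/
def Q' (hA : N ⊓ A = ⊥) (hB : N ⊓ B = ⊥) :=
  HNNExtension (H ⧸ N) (rA A N).range (rB B N).range (phibar A B φ N hA hB)

instance (hA : N ⊓ A = ⊥) (hB : N ⊓ B = ⊥) : Group (Q' A B φ N hA hB) := by
  unfold Q'; infer_instance

def u (hA : N ⊓ A = ⊥) (hB : N ⊓ B = ⊥) :
    HNNExtension H A B φ →* Q' A B φ N hA hB :=
  HNNExtension.lift ((HNNExtension.of).comp (QuotientGroup.mk' N)) HNNExtension.t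
    (by
      intro a
      have h1 := HNNExtension.t_mul_of (φ := phibar A B φ N hA hB) ((eA A N hA) a)
      have h2 : phibar A B φ N hA hB ((eA A N hA) a) = (eB B N hB) (φ a) := by
        simp [phibar]
      rw [h2] at h1
      exact h1)

lemma u_of (hA : N ⊓ A = ⊥) (hB : N ⊓ B = ⊥) (h : H) :
    u A B φ N hA hB (HNNExtension.of h) = HNNExtension.of (QuotientGroup.mk h) := by
  simp only [u, HNNExtension.lift_of, MonoidHom.comp_apply]
  rfl

lemma K_le_ker_u (hA : N ⊓ A = ⊥) (hB : N ⊓ B = ⊥) :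
    K A B φ N ≤ (u A B φ N hA hB).ker := by
  apply Subgroup.normalClosure_le_normal
  rintro x ⟨n, hn, rfl⟩
  simp only [SetLike.mem_coe, MonoidHom.mem_ker, u_of]
  rw [show QuotientGroup.mk n = (1 : H ⧸ N) from (QuotientGroup.eq_one_iff n).2 hn]
  exact map_one _

lemma j_injective (hA : N ⊓ A = ⊥) (hB : N ⊓ B = ⊥) :
    Function.Injective (j A B φ N) := by
  set ubar : (HNNExtension H A B φ ⧸ K A B φ N) →* Q' A B φ N hA hB :=
    QuotientGroup.lift _ (u A B φ N hA hB) (K_le_ker_u A B φ N hA hB)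
  have key : ∀ x, ubar (j A B φ N x) = HNNExtension.of x := by
    intro x
    induction x using QuotientGroup.induction_on with
    | H h => rw [j_mk]; simpa [ubar, pi] using u_of A B φ N hA hB h
  intro x y hxy
  exact HNNExtension.of_injective (φ := phibar A B φ N hA hB)
    (by rw [← key x, ← key y, hxy])


section Orb
variable {Q : Type*} [Group Q] {S : Type*} [Group S]

/-- the orbit setoid of the left multiplication action of `S` on `Q` via `ι`. -/
def orbSetoid (ι : S →* Q) : Setoid Q where
  r x y := ∃ s : S, ι s * x = y
  iseqv := by
    constructor
    · exact fun x => ⟨1, by simp⟩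
    · rintro x y ⟨s, rfl⟩; exact ⟨s⁻¹, by simp [mul_assoc]⟩
    · rintro x y z ⟨s, rfl⟩ ⟨s', rfl⟩; exact ⟨s' * s, by simp [mul_assoc]⟩

/-- an orbit representative -/
def orbW (ι : S →* Q) (x : Q) : Q := (Quotient.mk (orbSetoid ι) x).out

lemma orbW_smul (ι : S →* Q) (s : S) (x : Q) : orbW ι (ι s * x) = orbW ι x := by
  unfold orbW
  congr 1
  exact Quotient.sound ⟨s⁻¹, by simp [mul_assoc]⟩

lemma orbW_exists (ι : S →* Q) (x : Q) : ∃ s : S, ι s * orbW ι x = x :=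
  Quotient.mk_out' (s₁ := orbSetoid ι) x

/-- the `S`-coordinate -/
def orbSec (ι : S →* Q) (x : Q) : S := (orbW_exists ι x).choose

lemma orbSec_spec (ι : S →* Q) (x : Q) : ι (orbSec ι x) * orbW ι x = x :=
  (orbW_exists ι x).choose_spec

lemma orbSec_smul (ι : S →* Q) (hι : Function.Injective ι) (s : S) (x : Q) :
    orbSec ι (ι s * x) = s * orbSec ι x := by
  apply hι
  have h1 := orbSec_spec ι (ι s * x)
  rw [orbW_smul] at h1
  have h2 := orbSec_spec ι x
  rw [map_mul]
  apply mul_right_cancel (b := orbW ι x)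
  rw [h1, mul_assoc, h2]

lemma orbSec_smul' (ι : S →* Q) (hι : Function.Injective ι) (s : S) (x : Q) :
    orbSec ι ((ι s)⁻¹ * x) = s⁻¹ * orbSec ι x := by
  simpa using orbSec_smul ι hι s⁻¹ x


end Orb

section Theta

variable {H : Type*} [Group H] (A B : Subgroup H) (φ : A ≃* B)
    (N : Subgroup H) [N.Normal]

abbrev Qt := HNNExtension H A B φ ⧸ K A B φ N

abbrev Nab := Additive (Abelianization ↥N)

abbrev Kab := Additive (Abelianization ↥(K A B φ N))

abbrev ofG : H →* HNNExtension H A B φ := HNNExtension.of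

/-- the map H → Q -/
def fK : H →* Qt A B φ N := (QuotientGroup.mk' (K A B φ N)).comp HNNExtension.of

abbrev Tt := MonoidAlgebra ℤ (Qt A B φ N) ⊗[ℤ] (Nab N)

abbrev Mq := Tt A B φ N ⧸ relSub (Qt A B φ N) H N (fK A B φ N)

lemma fK_eq_j_comp (h : H) : fK A B φ N h = j A B φ N (QuotientGroup.mk h) := rfl

lemma pi_of (h : H) : pi A B φ N (HNNExtension.of h) = fK A B φ N h := rfl

lemma fK_of_mem (n : H) (hn : n ∈ N) : fK A B φ N n = 1 :=
  (QuotientGroup.eq_one_iff _).2 (of_mem_K A B φ N n hn)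

/-- the conjugation action of `H` on `Nab` -/
def actN (h : H) : Nab N →+ Nab N :=
  MonoidHom.toAdditive (Abelianization.map (MulAut.conjNormal h).toMonoidHom)

lemma actN_eq (h : H) (m : Nab N) :
    actN N h m = Additive.ofMul ((Abelianization.map (MulAut.conjNormal h).toMonoidHom)
      (Additive.toMul m)) := rfl

lemma actN_of (h : H) (n : ↥N) (hmem : h * ↑n * h⁻¹ ∈ N) :
    actN N h (Additive.ofMul (Abelianization.of n)) =
      Additive.ofMul (Abelianization.of (⟨h * ↑n * h⁻¹, hmem⟩ : ↥N)) := by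
  have : (MulAut.conjNormal h) n = (⟨h * ↑n * h⁻¹, hmem⟩ : ↥N) :=
    Subtype.ext (by simp)
  simp [actN, Abelianization.map_of, this]

lemma ab_surj {Γ : Type*} [Group Γ] :
    Function.Surjective (Abelianization.of : Γ → Abelianization Γ) :=
  fun b => Quotient.exists_rep b

lemma abel_conj {Γ : Type*} [Group Γ] (c k : Γ) :
    Abelianization.of (c * k * c⁻¹) = Abelianization.of k := by
  rw [map_mul, map_mul, map_inv, mul_comm (Abelianization.of c) (Abelianization.of k),
    mul_assoc]
  simp

/-- the section Q → G -/
def SQ : Qt A B φ N → HNNExtension H A B φ :=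
  Function.surjInv (QuotientGroup.mk'_surjective (K A B φ N))

lemma pi_SQ (x : Qt A B φ N) : pi A B φ N (SQ A B φ N x) = x :=
  Function.surjInv_eq _ x

/-- the section R → H -/
def sR : H ⧸ N → H := Function.surjInv (QuotientGroup.mk'_surjective N)

lemma mk_sR (ρ : H ⧸ N) : QuotientGroup.mk (sR N ρ) = ρ :=
  Function.surjInv_eq (QuotientGroup.mk'_surjective N) ρ

/-- conjugation `N → K`, `n ↦ g n g⁻¹` -/
def conjOfHom (g : HNNExtension H A B φ) : ↥N →* ↥(K A B φ N) :=
  MonoidHom.mk' (fun n => ⟨g * ofG A B φ ↑n * g⁻¹,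
      Subgroup.Normal.conj_mem inferInstance _ (of_mem_K A B φ N ↑n n.2) g⟩)
    (fun n₁ n₂ => Subtype.ext (by
      simp only [Subgroup.coe_mul, map_mul, MulMemClass.mk_mul_mk]
      group))

lemma conjOfHom_coe (g : HNNExtension H A B φ) (n : ↥N) :
    (conjOfHom A B φ N g n : HNNExtension H A B φ) = g * ofG A B φ ↑n * g⁻¹ := rfl

def thetaG (g : HNNExtension H A B φ) :
    Abelianization ↥N →* Abelianization ↥(K A B φ N) :=
  Abelianization.lift ((Abelianization.of).comp (conjOfHom A B φ N g))

lemma thetaG_of (g : HNNExtension H A B φ) (n : ↥N) :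
    thetaG A B φ N g (Abelianization.of n) = Abelianization.of (conjOfHom A B φ N g n) :=
  Abelianization.lift_apply_of _ _

lemma thetaG_congr (w w' : HNNExtension H A B φ) (h : pi A B φ N w = pi A B φ N w') :
    thetaG A B φ N w = thetaG A B φ N w' := by
  have hc : w⁻¹ * w' ∈ K A B φ N := by
    rw [← QuotientGroup.eq_one_iff]
    show pi A B φ N (w⁻¹ * w') = 1
    rw [map_mul, map_inv, h]
    simp
  apply MonoidHom.ext
  intro m
  obtain ⟨n, rfl⟩ := ab_surj m
  rw [thetaG_of, thetaG_of]
  set c := w⁻¹ * w' with hcdef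
  have hw' : w' = w * c := by rw [hcdef]; group
  set kc : ↥(K A B φ N) := ⟨w * c * w⁻¹, Subgroup.Normal.conj_mem inferInstance _ hc w⟩
  have : conjOfHom A B φ N w' n = kc * conjOfHom A B φ N w n * kc⁻¹ := by
    apply Subtype.ext
    simp only [Subgroup.coe_mul, InvMemClass.coe_inv, conjOfHom_coe, hw']
    simp only [kc]
    group
  rw [this, abel_conj]

/-- `ℓ q : Nab →+ Kab`, `m ↦ S(q) m S(q)⁻¹` -/
def ell (q : Qt A B φ N) : Nab N →+ Kab A B φ N :=
  MonoidHom.toAdditive (thetaG A B φ N (SQ A B φ N q))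

lemma ell_of (q : Qt A B φ N) (n : ↥N) :
    ell A B φ N q (Additive.ofMul (Abelianization.of n)) =
      Additive.ofMul (Abelianization.of (conjOfHom A B φ N (SQ A B φ N q) n)) := by
  show Additive.ofMul (thetaG A B φ N (SQ A B φ N q) (Abelianization.of n)) = _
  rw [thetaG_of]

def theta0 : Tt A B φ N →ₗ[ℤ] Kab A B φ N :=
  TensorProduct.lift ((Finsupp.lsum ℤ
    (fun q => LinearMap.toSpanSingleton ℤ _ ((ell A B φ N q).toIntLinearMap))) ∘ₗ
      (MonoidAlgebra.coeffLinearEquiv ℤ).toLinearMap)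

lemma theta0_single (q : Qt A B φ N) (z : ℤ) (m : Nab N) :
    theta0 A B φ N (MonoidAlgebra.single q z ⊗ₜ[ℤ] m) = z • ell A B φ N q m := by
  rw [theta0]
  erw [TensorProduct.lift.tmul]
  rw [LinearMap.comp_apply, LinearEquiv.coe_coe,
    MonoidAlgebra.coeffLinearEquiv_apply, MonoidAlgebra.coeff_single]
  erw [Finsupp.lsum_single]
  simp [LinearMap.toSpanSingleton_apply]

lemma theta0_of (q : Qt A B φ N) (m : Nab N) :
    theta0 A B φ N (MonoidAlgebra.of ℤ _ q ⊗ₜ[ℤ] m) = ell A B φ N q m := by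
  rw [MonoidAlgebra.of_apply, theta0_single, one_smul]

lemma ell_mul_fK (q : Qt A B φ N) (h : H) (m : Nab N) :
    ell A B φ N (q * fK A B φ N h) m = ell A B φ N q (actN N h m) := by
  obtain ⟨n, hn⟩ := ab_surj (Additive.toMul m)
  have hm : m = Additive.ofMul (Abelianization.of n) := by
    rw [hn]; rfl
  subst hm
  have hmem : h * ↑n * h⁻¹ ∈ N := Subgroup.Normal.conj_mem inferInstance _ n.2 h
  rw [actN_of N h n hmem, ell_of, ell_of]
  have hcongr : thetaG A B φ N (SQ A B φ N (q * fK A B φ N h)) =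
      thetaG A B φ N (SQ A B φ N q * HNNExtension.of h) := by
    apply thetaG_congr
    rw [pi_SQ, map_mul, pi_SQ, pi_of]
  have h1 := congrArg (fun F => F (Abelianization.of n)) hcongr
  simp only [thetaG_of] at h1
  have h2 : conjOfHom A B φ N (SQ A B φ N q * HNNExtension.of h) n =
      conjOfHom A B φ N (SQ A B φ N q) ⟨h * ↑n * h⁻¹, hmem⟩ := by
    apply Subtype.ext
    simp only [conjOfHom_coe]
    show _ = SQ A B φ N q * ofG A B φ (h * ↑n * h⁻¹) * (SQ A B φ N q)⁻¹
    rw [map_mul, map_mul, map_inv]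
    group
  rw [h2] at h1
  exact congrArg Additive.ofMul h1

lemma theta_rel (a : MonoidAlgebra ℤ (Qt A B φ N)) (h : H) (m : Nab N) :
    theta0 A B φ N ((a * MonoidAlgebra.of ℤ _ (fK A B φ N h)) ⊗ₜ[ℤ] m) =
      theta0 A B φ N (a ⊗ₜ[ℤ] (actN N h m)) := by
  induction a using MonoidAlgebra.induction_linear with
  | zero => simp
  | add f g hf hg =>
      rw [add_mul, TensorProduct.add_tmul, TensorProduct.add_tmul, map_add, map_add, hf, hg]
  | single q z =>
      have : (MonoidAlgebra.single q z : MonoidAlgebra ℤ (Qt A B φ N)) *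
          MonoidAlgebra.of ℤ _ (fK A B φ N h) =
          MonoidAlgebra.single (q * fK A B φ N h) z := by
        rw [MonoidAlgebra.of_apply, MonoidAlgebra.single_mul_single, mul_one]
      rw [this, theta0_single, theta0_single, ell_mul_fK]

lemma theta_vanish : ∀ x ∈ relSub (Qt A B φ N) H N (fK A B φ N), theta0 A B φ N x = 0 := by
  intro x hx
  have key : ∀ x ∈ relSub (Qt A B φ N) H N (fK A B φ N),
      ∀ z : MonoidAlgebra ℤ (Qt A B φ N), theta0 A B φ N (z • x) = 0 := by
    intro x hx
    refine Submodule.span_induction ?_ ?_ ?_ ?_ hx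
    · rintro x ⟨a, h, m, rfl⟩ z
      rw [smul_sub, TensorProduct.smul_tmul', TensorProduct.smul_tmul', smul_eq_mul,
        smul_eq_mul, map_sub, ← mul_assoc, ← actN_eq]
      rw [theta_rel A B φ N (z * a) h m]
      exact sub_self _
    · intro z; rw [smul_zero, map_zero]
    · intro u v _ _ hu hv z
      rw [smul_add, map_add, hu, hv, add_zero]
    · intro c u _ hu z
      rw [smul_smul]
      exact hu (z * c)
  have := key x hx 1
  rwa [one_smul] at this

/-- `θ̄ : Mq →+ Kab` -/
def thetaBar : Mq A B φ N →+ Kab A B φ N :=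
  QuotientAddGroup.lift (relSub (Qt A B φ N) H N (fK A B φ N)).toAddSubgroup
    (theta0 A B φ N).toAddMonoidHom (fun x hx => theta_vanish A B φ N x hx)

lemma thetaBar_mk (z : Tt A B φ N) :
    thetaBar A B φ N (Submodule.Quotient.mk z) = theta0 A B φ N z := rfl

lemma mk_rel (a : MonoidAlgebra ℤ (Qt A B φ N)) (h : H) (m : Nab N) :
    (Submodule.Quotient.mk ((a * MonoidAlgebra.of ℤ _ (fK A B φ N h)) ⊗ₜ[ℤ] m) :
        Mq A B φ N) =
      Submodule.Quotient.mk (a ⊗ₜ[ℤ] (actN N h m)) := by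
  rw [Submodule.Quotient.eq]
  exact Submodule.subset_span ⟨a, h, m, by rw [actN_eq]⟩

end Theta

section DerivH

variable {H : Type*} [Group H] (A B : Subgroup H) (φ : A ≃* B)
    (N : Subgroup H) [N.Normal]

abbrev Vt := Qt A B φ N → Mq A B φ N

/-- the (coinduced) action of `Q` on `V = Q → Mq` -/
def actV (q : Qt A B φ N) (f : Vt A B φ N) : Vt A B φ N := fun x => f (q⁻¹ * x)

lemma actV_one (f : Vt A B φ N) : actV A B φ N 1 f = f := by
  funext x; simp [actV]

lemma actV_actV (q₁ q₂ : Qt A B φ N) (f : Vt A B φ N) :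
    actV A B φ N q₁ (actV A B φ N q₂ f) = actV A B φ N (q₁ * q₂) f := by
  funext x; simp [actV, mul_assoc]

lemma actV_add (q : Qt A B φ N) (f g : Vt A B φ N) :
    actV A B φ N q (f + g) = actV A B φ N q f + actV A B φ N q g := rfl

lemma actV_neg (q : Qt A B φ N) (f : Vt A B φ N) :
    actV A B φ N q (-f) = -(actV A B φ N q f) := rfl

lemma actV_sub (q : Qt A B φ N) (f g : Vt A B φ N) :
    actV A B φ N q (f - g) = actV A B φ N q f - actV A B φ N q g := rfl

lemma actV_zero (q : Qt A B φ N) : actV A B φ N q (0 : Vt A B φ N) = 0 := rfl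

/-- the semidirect product `V ⋊ Q` -/
@[ext]
structure Wt (A B : Subgroup H) (φ : A ≃* B) (N : Subgroup H) [N.Normal] where
  v : Vt A B φ N
  q : Qt A B φ N

instance : Group (Wt A B φ N) where
  mul w₁ w₂ := ⟨w₁.v + actV A B φ N w₁.q w₂.v, w₁.q * w₂.q⟩
  one := ⟨0, 1⟩
  inv w := ⟨-(actV A B φ N w.q⁻¹ w.v), w.q⁻¹⟩
  mul_assoc w₁ w₂ w₃ := by
    refine Wt.ext ?_ ?_
    · show (w₁.v + actV A B φ N w₁.q w₂.v) + actV A B φ N (w₁.q * w₂.q) w₃.v =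
        w₁.v + actV A B φ N w₁.q (w₂.v + actV A B φ N w₂.q w₃.v)
      rw [actV_add, ← actV_actV, add_assoc]
    · exact mul_assoc _ _ _
  one_mul w := by
    refine Wt.ext ?_ ?_
    · show 0 + actV A B φ N 1 w.v = w.v
      rw [actV_one, zero_add]
    · exact one_mul _
  mul_one w := by
    refine Wt.ext ?_ ?_
    · show w.v + actV A B φ N w.q 0 = w.v
      rw [actV_zero, add_zero]
    · exact mul_one _
  inv_mul_cancel w := by
    refine Wt.ext ?_ ?_
    · show -(actV A B φ N w.q⁻¹ w.v) + actV A B φ N w.q⁻¹ w.v = 0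
      rw [neg_add_cancel]
    · exact inv_mul_cancel _

lemma Wt.mul_v (w₁ w₂ : Wt A B φ N) :
    (w₁ * w₂).v = w₁.v + actV A B φ N w₁.q w₂.v := rfl

lemma Wt.mul_q (w₁ w₂ : Wt A B φ N) : (w₁ * w₂).q = w₁.q * w₂.q := rfl

lemma Wt.one_v : (1 : Wt A B φ N).v = 0 := rfl

lemma Wt.one_q : (1 : Wt A B φ N).q = 1 := rfl

lemma Wt.inv_v (w : Wt A B φ N) : (w⁻¹).v = -(actV A B φ N w.q⁻¹ w.v) := rfl

lemma Wt.inv_q (w : Wt A B φ N) : (w⁻¹).q = w.q⁻¹ := rfl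

/-- `ρ : Q → R`, the `R`-coordinate relative to chosen orbit representatives of `R\Q`. -/
def rhoQ (x : Qt A B φ N) : H ⧸ N := orbSec (j A B φ N) x

lemma rhoQ_spec (x : Qt A B φ N) :
    j A B φ N (rhoQ A B φ N x) * orbW (j A B φ N) x = x := orbSec_spec _ x

lemma rhoQ_smul (hA : N ⊓ A = ⊥) (hB : N ⊓ B = ⊥) (ρ : H ⧸ N) (x : Qt A B φ N) :
    rhoQ A B φ N (j A B φ N ρ * x) = ρ * rhoQ A B φ N x :=
  orbSec_smul _ (j_injective A B φ N hA hB) ρ x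

lemma rhoQ_smul' (hA : N ⊓ A = ⊥) (hB : N ⊓ B = ⊥) (ρ : H ⧸ N) (x : Qt A B φ N) :
    rhoQ A B φ N ((j A B φ N ρ)⁻¹ * x) = ρ⁻¹ * rhoQ A B φ N x :=
  orbSec_smul' _ (j_injective A B φ N hA hB) ρ x

/-- the `N`-element `σ(ρ(x))⁻¹ h σ(r(h)⁻¹ ρ(x))` -/
def nuN (h : H) (x : Qt A B φ N) : H :=
  (sR N (rhoQ A B φ N x))⁻¹ * h * sR N ((QuotientGroup.mk h : H ⧸ N)⁻¹ * rhoQ A B φ N x)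

lemma nuN_mem (h : H) (x : Qt A B φ N) : nuN A B φ N h x ∈ N := by
  rw [← QuotientGroup.eq_one_iff]
  show QuotientGroup.mk' N _ = 1
  rw [nuN, map_mul, map_mul, map_inv]
  show ((QuotientGroup.mk (sR N (rhoQ A B φ N x)) : H ⧸ N))⁻¹ *
    QuotientGroup.mk h * QuotientGroup.mk
      (sR N ((QuotientGroup.mk h : H ⧸ N)⁻¹ * rhoQ A B φ N x)) = 1
  rw [mk_sR, mk_sR]
  group

/-- the explicit derivation on `H` -/
def dH (h : H) : Vt A B φ N := fun x =>
  Submodule.Quotient.mk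
    (MonoidAlgebra.single (x⁻¹ * j A B φ N (rhoQ A B φ N x)) (1 : ℤ) ⊗ₜ[ℤ]
      Additive.ofMul (Abelianization.of (⟨nuN A B φ N h x, nuN_mem A B φ N h x⟩ : ↥N)))

lemma dH_mul (hA : N ⊓ A = ⊥) (hB : N ⊓ B = ⊥) (h₁ h₂ : H) :
    dH A B φ N (h₁ * h₂) =
      dH A B φ N h₁ + actV A B φ N (fK A B φ N h₁) (dH A B φ N h₂) := by
  funext x
  have hrho : rhoQ A B φ N ((fK A B φ N h₁)⁻¹ * x) =
      (QuotientGroup.mk h₁ : H ⧸ N)⁻¹ * rhoQ A B φ N x := by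
    rw [fK_eq_j_comp]
    exact rhoQ_smul' A B φ N hA hB _ x
  show _ = dH A B φ N h₁ x + dH A B φ N h₂ ((fK A B φ N h₁)⁻¹ * x)
  rw [dH, dH, dH]
  simp only [hrho]
  have harg : ((fK A B φ N h₁)⁻¹ * x)⁻¹ *
      j A B φ N ((QuotientGroup.mk h₁ : H ⧸ N)⁻¹ * rhoQ A B φ N x) =
      x⁻¹ * j A B φ N (rhoQ A B φ N x) := by
    rw [map_mul, map_inv, fK_eq_j_comp]
    group
  rw [harg, ← Submodule.Quotient.mk_add, ← TensorProduct.tmul_add]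
  have hnu : (⟨nuN A B φ N (h₁ * h₂) x, nuN_mem A B φ N (h₁ * h₂) x⟩ : ↥N) =
      (⟨nuN A B φ N h₁ x, nuN_mem A B φ N h₁ x⟩ : ↥N) *
        (⟨nuN A B φ N h₂ ((fK A B φ N h₁)⁻¹ * x),
          nuN_mem A B φ N h₂ ((fK A B φ N h₁)⁻¹ * x)⟩ : ↥N) := by
    apply Subtype.ext
    show nuN A B φ N (h₁ * h₂) x = nuN A B φ N h₁ x * nuN A B φ N h₂ ((fK A B φ N h₁)⁻¹ * x)
    rw [nuN, nuN, nuN, hrho]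
    have hmm : ((QuotientGroup.mk (h₁ * h₂) : H ⧸ N))⁻¹ * rhoQ A B φ N x =
        (QuotientGroup.mk h₂ : H ⧸ N)⁻¹ *
          ((QuotientGroup.mk h₁ : H ⧸ N)⁻¹ * rhoQ A B φ N x) := by
      rw [QuotientGroup.mk_mul]
      group
    rw [hmm]
    group
  rw [hnu, map_mul]
  rfl

lemma dH_of_mem (n : H) (hn : n ∈ N) (x : Qt A B φ N) :
    dH A B φ N n x =
      Submodule.Quotient.mk
        (MonoidAlgebra.single x⁻¹ (1 : ℤ) ⊗ₜ[ℤ]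
          Additive.ofMul (Abelianization.of (⟨n, hn⟩ : ↥N))) := by
  have hfk : fK A B φ N (sR N (rhoQ A B φ N x)) = j A B φ N (rhoQ A B φ N x) := by
    rw [fK_eq_j_comp, mk_sR]
  have hsingle : (MonoidAlgebra.single x⁻¹ (1 : ℤ) :
        MonoidAlgebra ℤ (Qt A B φ N)) * MonoidAlgebra.of ℤ _ (fK A B φ N (sR N (rhoQ A B φ N x))) =
      MonoidAlgebra.single (x⁻¹ * j A B φ N (rhoQ A B φ N x)) (1 : ℤ) := by
    rw [MonoidAlgebra.of_apply, MonoidAlgebra.single_mul_single, mul_one, hfk]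
  have hmem2 : sR N (rhoQ A B φ N x) * ↑(⟨nuN A B φ N n x, nuN_mem A B φ N n x⟩ : ↥N) *
      (sR N (rhoQ A B φ N x))⁻¹ ∈ N :=
    Subgroup.Normal.conj_mem inferInstance _ (nuN_mem A B φ N n x) _
  have hval : (⟨sR N (rhoQ A B φ N x) * ↑(⟨nuN A B φ N n x, nuN_mem A B φ N n x⟩ : ↥N) *
      (sR N (rhoQ A B φ N x))⁻¹, hmem2⟩ : ↥N) = ⟨n, hn⟩ := by
    apply Subtype.ext
    show sR N (rhoQ A B φ N x) * nuN A B φ N n x * (sR N (rhoQ A B φ N x))⁻¹ = n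
    rw [nuN]
    rw [show (QuotientGroup.mk n : H ⧸ N) = 1 from (QuotientGroup.eq_one_iff n).2 hn]
    rw [inv_one, one_mul]
    group
  rw [dH, ← hsingle, mk_rel, actN_of N _ _ hmem2, hval]

end DerivH

section PhiSec

variable {H : Type*} [Group H] (A B : Subgroup H) (φ : A ≃* B)
    (N : Subgroup H) [N.Normal]

def tau : Qt A B φ N := pi A B φ N HNNExtension.t

lemma conj_rel (a : ↥A) :
    tau A B φ N * fK A B φ N ↑a = fK A B φ N ↑(φ a) * tau A B φ N := by
  have := congrArg (pi A B φ N) (HNNExtension.t_mul_of (φ := φ) a)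
  rwa [map_mul, map_mul] at this

def Delta (a : ↥A) : Vt A B φ N :=
  dH A B φ N ↑(φ a) - actV A B φ N (tau A B φ N) (dH A B φ N ↑a)

lemma dH_one : dH A B φ N 1 = 0 := by
  funext x
  have h1 : (⟨nuN A B φ N 1 x, nuN_mem A B φ N 1 x⟩ : ↥N) = 1 := by
    apply Subtype.ext
    show nuN A B φ N 1 x = 1
    have h0 : ((QuotientGroup.mk (1 : H)) : H ⧸ N) = 1 := by simp
    rw [nuN, h0, inv_one, one_mul]
    group
  rw [dH, h1]
  show Submodule.Quotient.mk (_ ⊗ₜ[ℤ] (0 : Nab N)) = 0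
  rw [TensorProduct.tmul_zero, Submodule.Quotient.mk_zero]

lemma Delta_cocycle (hA : N ⊓ A = ⊥) (hB : N ⊓ B = ⊥) (a₁ a₂ : ↥A) :
    Delta A B φ N (a₁ * a₂) =
      Delta A B φ N a₁ + actV A B φ N (fK A B φ N ↑(φ a₁)) (Delta A B φ N a₂) := by
  have hφ : (↑(φ (a₁ * a₂)) : H) = ↑(φ a₁) * ↑(φ a₂) := by rw [map_mul]; rfl
  have hc : (↑(a₁ * a₂) : H) = ↑a₁ * ↑a₂ := rfl
  rw [Delta, hφ, hc, dH_mul A B φ N hA hB, dH_mul A B φ N hA hB]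
  simp only [Delta, actV_sub, actV_add, actV_actV]
  rw [conj_rel]
  abel

lemma Delta_one : Delta A B φ N 1 = 0 := by
  rw [Delta]
  rw [show (↑(φ 1) : H) = 1 by rw [map_one]; rfl]
  rw [show (↑(1 : ↥A) : H) = 1 from rfl]
  rw [dH_one, actV_zero, sub_zero]

lemma Delta_inv (hA : N ⊓ A = ⊥) (hB : N ⊓ B = ⊥) (a : ↥A) :
    actV A B φ N (fK A B φ N ↑(φ a)) (Delta A B φ N a⁻¹) = -(Delta A B φ N a) := by
  have h0 := Delta_cocycle A B φ N hA hB a a⁻¹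
  rw [mul_inv_cancel, Delta_one] at h0
  have := congrArg (fun z => z - Delta A B φ N a) h0
  simp only [zero_sub, add_sub_cancel_left] at this
  rw [← this]

def jB : ↥B →* Qt A B φ N := (fK A B φ N).comp B.subtype

lemma jB_injective (hA : N ⊓ A = ⊥) (hB : N ⊓ B = ⊥) :
    Function.Injective (jB A B φ N) := by
  intro x y hxy
  apply sub_injective N B hB
  apply j_injective A B φ N hA hB
  exact hxy

/-- the `B`-coordinate of `x ∈ Q` relative to orbit representatives of `B\Q` -/
def betaB (x : Qt A B φ N) : ↥B := orbSec (jB A B φ N) x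

lemma betaB_smul' (hA : N ⊓ A = ⊥) (hB : N ⊓ B = ⊥) (b : ↥B) (x : Qt A B φ N) :
    betaB A B φ N ((jB A B φ N b)⁻¹ * x) = b⁻¹ * betaB A B φ N x :=
  orbSec_smul' _ (jB_injective A B φ N hA hB) b x

/-- the element trivializing the cocycle `Δ` -/
def vT : Vt A B φ N := fun x => Delta A B φ N (φ.symm (betaB A B φ N x)) x

lemma fK_phi_eq_jB (a : ↥A) : fK A B φ N ↑(φ a) = jB A B φ N (φ a) := rfl

lemma star (hA : N ⊓ A = ⊥) (hB : N ⊓ B = ⊥) (a : ↥A) :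
    Delta A B φ N a =
      vT A B φ N - actV A B φ N (fK A B φ N ↑(φ a)) (vT A B φ N) := by
  funext x
  have hbeta : betaB A B φ N ((fK A B φ N ↑(φ a))⁻¹ * x) =
      (φ a)⁻¹ * betaB A B φ N x := by
    rw [fK_phi_eq_jB]
    exact betaB_smul' A B φ N hA hB (φ a) x
  have hval : vT A B φ N ((fK A B φ N ↑(φ a))⁻¹ * x) =
      -(Delta A B φ N a x) + vT A B φ N x := by
    rw [vT]
    show Delta A B φ N (φ.symm (betaB A B φ N ((fK A B φ N ↑(φ a))⁻¹ * x)))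
      ((fK A B φ N ↑(φ a))⁻¹ * x) = _
    rw [hbeta, map_mul, map_inv, MulEquiv.symm_apply_apply]
    rw [Delta_cocycle A B φ N hA hB]
    have hinva : fK A B φ N ↑(φ a⁻¹) = (fK A B φ N ↑(φ a))⁻¹ := by
      rw [map_inv, show (↑((φ a)⁻¹) : H) = (↑(φ a))⁻¹ from rfl, map_inv]
    show Delta A B φ N a⁻¹ ((fK A B φ N ↑(φ a))⁻¹ * x) +
        actV A B φ N (fK A B φ N ↑(φ a⁻¹)) (Delta A B φ N (φ.symm (betaB A B φ N x)))
          ((fK A B φ N ↑(φ a))⁻¹ * x) = _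
    have h1 : Delta A B φ N a⁻¹ ((fK A B φ N ↑(φ a))⁻¹ * x) = -(Delta A B φ N a) x := by
      have := congrFun (Delta_inv A B φ N hA hB a) x
      exact this
    have h2 : actV A B φ N (fK A B φ N ↑(φ a⁻¹)) (Delta A B φ N (φ.symm (betaB A B φ N x)))
        ((fK A B φ N ↑(φ a))⁻¹ * x) = Delta A B φ N (φ.symm (betaB A B φ N x)) x := by
      rw [hinva, actV]
      show Delta A B φ N (φ.symm (betaB A B φ N x))
        (((fK A B φ N ↑(φ a))⁻¹)⁻¹ * ((fK A B φ N ↑(φ a))⁻¹ * x)) = _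
      rw [inv_inv, mul_inv_cancel_left]
    rw [h1, h2]
    rfl
  show Delta A B φ N a x = vT A B φ N x - vT A B φ N ((fK A B φ N ↑(φ a))⁻¹ * x)
  rw [hval]
  abel

/-- the homomorphism `H →* W` -/
def PhiH (hA : N ⊓ A = ⊥) (hB : N ⊓ B = ⊥) : H →* Wt A B φ N :=
  MonoidHom.mk' (fun h => ⟨dH A B φ N h, fK A B φ N h⟩)
    (fun h₁ h₂ => by
      refine (Wt.ext ?_ ?_).symm
      · show dH A B φ N h₁ + actV A B φ N (fK A B φ N h₁) (dH A B φ N h₂) = _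
        rw [← dH_mul A B φ N hA hB]
      · show fK A B φ N h₁ * fK A B φ N h₂ = _
        rw [← map_mul])

/-- the main homomorphism `Φ : G →* W = V ⋊ Q` -/
def Phi (hA : N ⊓ A = ⊥) (hB : N ⊓ B = ⊥) : HNNExtension H A B φ →* Wt A B φ N :=
  HNNExtension.lift (PhiH A B φ N hA hB) ⟨vT A B φ N, tau A B φ N⟩
    (by
      intro a
      refine Wt.ext ?_ ?_
      · show vT A B φ N + actV A B φ N (tau A B φ N) (dH A B φ N ↑a) =
          dH A B φ N ↑(φ a) + actV A B φ N (fK A B φ N ↑(φ a)) (vT A B φ N)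
        have hs := star A B φ N hA hB a
        rw [Delta] at hs
        rw [sub_eq_sub_iff_add_eq_add] at hs
        exact hs.symm
      · show tau A B φ N * fK A B φ N ↑a = fK A B φ N ↑(φ a) * tau A B φ N
        exact conj_rel A B φ N a)

lemma Phi_of (hA : N ⊓ A = ⊥) (hB : N ⊓ B = ⊥) (h : H) :
    Phi A B φ N hA hB (HNNExtension.of h) = ⟨dH A B φ N h, fK A B φ N h⟩ := by
  rw [Phi]
  exact HNNExtension.lift_of _ _ _ h

lemma Phi_t (hA : N ⊓ A = ⊥) (hB : N ⊓ B = ⊥) :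
    Phi A B φ N hA hB HNNExtension.t = ⟨vT A B φ N, tau A B φ N⟩ :=
  HNNExtension.lift_t _ _ _

/-- projection W → Q -/
def projW : Wt A B φ N →* Qt A B φ N :=
  MonoidHom.mk' (fun w => w.q) (fun _ _ => rfl)

lemma Phi_q (hA : N ⊓ A = ⊥) (hB : N ⊓ B = ⊥) (g : HNNExtension H A B φ) :
    (Phi A B φ N hA hB g).q = pi A B φ N g := by
  have : (projW A B φ N).comp (Phi A B φ N hA hB) = pi A B φ N := by
    apply HNNExtension.hom_ext
    · apply MonoidHom.ext
      intro h
      show (Phi A B φ N hA hB (HNNExtension.of h)).q = pi A B φ N (HNNExtension.of h)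
      rw [Phi_of A B φ N hA hB]
      rfl
    · show (Phi A B φ N hA hB HNNExtension.t).q = pi A B φ N HNNExtension.t
      rw [Phi_t A B φ N hA hB]
      rfl
  exact DFunLike.congr_fun this g

/-- the derivation `D : G → V` -/
def DD (hA : N ⊓ A = ⊥) (hB : N ⊓ B = ⊥) (g : HNNExtension H A B φ) : Vt A B φ N :=
  (Phi A B φ N hA hB g).v

lemma DD_mul (hA : N ⊓ A = ⊥) (hB : N ⊓ B = ⊥) (g₁ g₂ : HNNExtension H A B φ) :
    DD A B φ N hA hB (g₁ * g₂) =
      DD A B φ N hA hB g₁ + actV A B φ N (pi A B φ N g₁) (DD A B φ N hA hB g₂) := by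
  rw [DD, map_mul, Wt.mul_v, ← Phi_q A B φ N hA hB]
  rfl

lemma DD_one (hA : N ⊓ A = ⊥) (hB : N ⊓ B = ⊥) : DD A B φ N hA hB 1 = 0 := by
  rw [DD, map_one]
  rfl

lemma DD_of (hA : N ⊓ A = ⊥) (hB : N ⊓ B = ⊥) (h : H) :
    DD A B φ N hA hB (HNNExtension.of h) = dH A B φ N h := by
  rw [DD, Phi_of A B φ N hA hB]

lemma DD_inv (hA : N ⊓ A = ⊥) (hB : N ⊓ B = ⊥) (g : HNNExtension H A B φ) :
    actV A B φ N (pi A B φ N g) (DD A B φ N hA hB g⁻¹) = -(DD A B φ N hA hB g) := by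
  have h0 := DD_mul A B φ N hA hB g g⁻¹
  rw [mul_inv_cancel, DD_one A B φ N hA hB] at h0
  have := congrArg (fun z => z - DD A B φ N hA hB g) h0
  simp only [zero_sub, add_sub_cancel_left] at this
  rw [← this]

end PhiSec

section Shape

variable {H : Type*} [Group H] (A B : Subgroup H) (φ : A ≃* B)
    (N : Subgroup H) [N.Normal]

lemma smul_mk_tmul (q : Qt A B φ N) (a : MonoidAlgebra ℤ (Qt A B φ N)) (m : Nab N) :
    (MonoidAlgebra.of ℤ (Qt A B φ N) q) • (Submodule.Quotient.mk (a ⊗ₜ[ℤ] m) : Mq A B φ N) =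
      Submodule.Quotient.mk ((MonoidAlgebra.of ℤ (Qt A B φ N) q * a) ⊗ₜ[ℤ] m) := by
  rw [← Submodule.Quotient.mk_smul, TensorProduct.smul_tmul', smul_eq_mul]

lemma of_mul_single (q x : Qt A B φ N) (z : ℤ) :
    MonoidAlgebra.of ℤ (Qt A B φ N) q * MonoidAlgebra.single x z =
      MonoidAlgebra.single (q * x) z := by
  rw [MonoidAlgebra.of_apply, MonoidAlgebra.single_mul_single, one_mul]

lemma pi_eq_one_of_mem (g : HNNExtension H A B φ) (hg : g ∈ K A B φ N) :
    pi A B φ N g = 1 := (QuotientGroup.eq_one_iff g).2 hg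

lemma DD_conj (hA : N ⊓ A = ⊥) (hB : N ⊓ B = ⊥) (g k : HNNExtension H A B φ)
    (hk : pi A B φ N k = 1) :
    DD A B φ N hA hB (g * k * g⁻¹) =
      actV A B φ N (pi A B φ N g) (DD A B φ N hA hB k) := by
  rw [DD_mul A B φ N hA hB (g * k) g⁻¹, DD_mul A B φ N hA hB g k, map_mul, hk, mul_one,
    DD_inv A B φ N hA hB]
  abel

/-- the subgroup of `G` of elements `g ∈ K` with `D g x = x⁻¹ • D g 1`. -/
def Tsub (hA : N ⊓ A = ⊥) (hB : N ⊓ B = ⊥) : Subgroup (HNNExtension H A B φ) where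
  carrier := {g | pi A B φ N g = 1 ∧ ∀ x, DD A B φ N hA hB g x =
    (MonoidAlgebra.of ℤ (Qt A B φ N) x⁻¹) • DD A B φ N hA hB g 1}
  one_mem' := by
    constructor
    · rw [map_one]
    · intro x
      rw [DD_one A B φ N hA hB]
      show (0 : Mq A B φ N) = MonoidAlgebra.of ℤ (Qt A B φ N) x⁻¹ • (0 : Mq A B φ N)
      rw [smul_zero]
  mul_mem' := by
    rintro g₁ g₂ ⟨hg₁, hs₁⟩ ⟨hg₂, hs₂⟩
    constructor
    · rw [map_mul, hg₁, hg₂, one_mul]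
    · intro x
      rw [DD_mul A B φ N hA hB, hg₁, actV_one]
      show DD A B φ N hA hB g₁ x + DD A B φ N hA hB g₂ x = _
      rw [hs₁ x, hs₂ x, ← smul_add]
      rfl
  inv_mem' := by
    rintro g ⟨hg, hs⟩
    have hinv : DD A B φ N hA hB g⁻¹ = -(DD A B φ N hA hB g) := by
      have := DD_inv A B φ N hA hB g
      rw [hg, actV_one] at this
      exact this
    constructor
    · rw [map_inv, hg, inv_one]
    · intro x
      rw [hinv]
      show -(DD A B φ N hA hB g x) = _
      rw [hs x]
      show _ = MonoidAlgebra.of ℤ (Qt A B φ N) x⁻¹ • (-(DD A B φ N hA hB g 1))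
      rw [smul_neg]

lemma Tsub_normal (hA : N ⊓ A = ⊥) (hB : N ⊓ B = ⊥) : (Tsub A B φ N hA hB).Normal := by
  constructor
  rintro k ⟨hk, hs⟩ g
  constructor
  · rw [map_mul, map_mul, map_inv, hk, mul_one, mul_inv_cancel]
  · intro x
    rw [DD_conj A B φ N hA hB g k hk]
    show DD A B φ N hA hB k ((pi A B φ N g)⁻¹ * x) =
      MonoidAlgebra.of ℤ (Qt A B φ N) x⁻¹ • DD A B φ N hA hB k ((pi A B φ N g)⁻¹ * 1)
    rw [mul_one, hs ((pi A B φ N g)⁻¹ * x), hs ((pi A B φ N g)⁻¹), inv_inv, smul_smul,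
      ← map_mul, mul_inv_rev, inv_inv]

lemma of_mem_Tsub (hA : N ⊓ A = ⊥) (hB : N ⊓ B = ⊥) (n : H) (hn : n ∈ N) :
    (HNNExtension.of n : HNNExtension H A B φ) ∈ Tsub A B φ N hA hB := by
  constructor
  · exact pi_eq_one_of_mem A B φ N _ (of_mem_K A B φ N n hn)
  · intro x
    rw [DD_of A B φ N hA hB, dH_of_mem A B φ N n hn x, dH_of_mem A B φ N n hn 1,
      smul_mk_tmul, of_mul_single]
    rw [inv_one, mul_one]

lemma K_le_Tsub (hA : N ⊓ A = ⊥) (hB : N ⊓ B = ⊥) :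
    K A B φ N ≤ Tsub A B φ N hA hB := by
  haveI := Tsub_normal A B φ N hA hB
  apply Subgroup.normalClosure_le_normal
  rintro x ⟨n, hn, rfl⟩
  exact of_mem_Tsub A B φ N hA hB n hn

lemma DD_shape (hA : N ⊓ A = ⊥) (hB : N ⊓ B = ⊥) (g : HNNExtension H A B φ)
    (hg : g ∈ K A B φ N) (x : Qt A B φ N) :
    DD A B φ N hA hB g x =
      (MonoidAlgebra.of ℤ (Qt A B φ N) x⁻¹) • DD A B φ N hA hB g 1 :=
  (K_le_Tsub A B φ N hA hB hg).2 x

end Shape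

section ChiSec

variable {H : Type*} [Group H] (A B : Subgroup H) (φ : A ≃* B)
    (N : Subgroup H) [N.Normal]

lemma DD_add_on_K (hA : N ⊓ A = ⊥) (hB : N ⊓ B = ⊥) (g₁ g₂ : HNNExtension H A B φ)
    (hg₁ : g₁ ∈ K A B φ N) :
    DD A B φ N hA hB (g₁ * g₂) 1 = DD A B φ N hA hB g₁ 1 + DD A B φ N hA hB g₂ 1 := by
  rw [DD_mul A B φ N hA hB, pi_eq_one_of_mem A B φ N g₁ hg₁, actV_one]
  rfl

def chi0 (hA : N ⊓ A = ⊥) (hB : N ⊓ B = ⊥) :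
    ↥(K A B φ N) →* Multiplicative (Mq A B φ N) :=
  MonoidHom.mk' (fun k => Multiplicative.ofAdd (DD A B φ N hA hB ↑k 1))
    (fun k₁ k₂ => congrArg Multiplicative.ofAdd
      (DD_add_on_K A B φ N hA hB ↑k₁ ↑k₂ k₁.2))

def chiAb (hA : N ⊓ A = ⊥) (hB : N ⊓ B = ⊥) :
    Abelianization ↥(K A B φ N) →* Multiplicative (Mq A B φ N) :=
  Abelianization.lift (chi0 A B φ N hA hB)

def chi (hA : N ⊓ A = ⊥) (hB : N ⊓ B = ⊥) : Kab A B φ N →+ Mq A B φ N :=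
  MonoidHom.toAdditiveLeft (chiAb A B φ N hA hB)

lemma chi_of (hA : N ⊓ A = ⊥) (hB : N ⊓ B = ⊥) (k : ↥(K A B φ N)) :
    chi A B φ N hA hB (Additive.ofMul (Abelianization.of k)) = DD A B φ N hA hB ↑k 1 := by
  show Multiplicative.toAdd (chiAb A B φ N hA hB (Abelianization.of k)) = _
  rw [chiAb, Abelianization.lift_apply_of]
  rfl

/-- the conjugation action of `G` on `Kab` -/
def actK (g : HNNExtension H A B φ) : Kab A B φ N →+ Kab A B φ N :=
  MonoidHom.toAdditive (Abelianization.map (MulAut.conjNormal g).toMonoidHom)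

lemma actK_eq (g : HNNExtension H A B φ) (x : Kab A B φ N) :
    actK A B φ N g x =
      Additive.ofMul ((Abelianization.map (MulAut.conjNormal g).toMonoidHom)
        (Additive.toMul x)) := rfl

lemma actK_of (g : HNNExtension H A B φ) (k : ↥(K A B φ N))
    (hmem : g * ↑k * g⁻¹ ∈ K A B φ N) :
    actK A B φ N g (Additive.ofMul (Abelianization.of k)) =
      Additive.ofMul (Abelianization.of (⟨g * ↑k * g⁻¹, hmem⟩ : ↥(K A B φ N))) := by
  have : (MulAut.conjNormal g) k = (⟨g * ↑k * g⁻¹, hmem⟩ : ↥(K A B φ N)) :=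
    Subtype.ext (by simp)
  simp [actK, Abelianization.map_of, this]

lemma DD_conj_one (hA : N ⊓ A = ⊥) (hB : N ⊓ B = ⊥) (g' g : HNNExtension H A B φ)
    (hg : g ∈ K A B φ N) :
    DD A B φ N hA hB (g' * g * g'⁻¹) 1 =
      MonoidAlgebra.of ℤ (Qt A B φ N) (pi A B φ N g') • DD A B φ N hA hB g 1 := by
  rw [DD_conj A B φ N hA hB g' g (pi_eq_one_of_mem A B φ N g hg)]
  show DD A B φ N hA hB g ((pi A B φ N g')⁻¹ * 1) = _
  rw [mul_one, DD_shape A B φ N hA hB g hg ((pi A B φ N g')⁻¹), inv_inv]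

lemma chi_equivariant (hA : N ⊓ A = ⊥) (hB : N ⊓ B = ⊥) (g : HNNExtension H A B φ)
    (x : Kab A B φ N) :
    chi A B φ N hA hB (actK A B φ N g x) =
      MonoidAlgebra.of ℤ (Qt A B φ N) (pi A B φ N g) • chi A B φ N hA hB x := by
  obtain ⟨k, hk⟩ := ab_surj (Additive.toMul x)
  have hx : x = Additive.ofMul (Abelianization.of k) := by rw [hk]; rfl
  subst hx
  have hmem : g * ↑k * g⁻¹ ∈ K A B φ N :=
    Subgroup.Normal.conj_mem inferInstance _ k.2 g
  rw [actK_of A B φ N g k hmem, chi_of, chi_of]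
  exact DD_conj_one A B φ N hA hB g ↑k k.2

lemma ell_conj (w : HNNExtension H A B φ) (q : Qt A B φ N) (hw : pi A B φ N w = q)
    (n : ↥N) :
    ell A B φ N q (Additive.ofMul (Abelianization.of n)) =
      Additive.ofMul (Abelianization.of (conjOfHom A B φ N w n)) := by
  rw [ell_of]
  have := congrArg (fun F => F (Abelianization.of n))
    (thetaG_congr A B φ N (SQ A B φ N q) w (by rw [pi_SQ, hw]))
  simp only [thetaG_of] at this
  exact congrArg Additive.ofMul this

/-- `mk` as an additive homomorphism -/
def mkHom : Tt A B φ N →+ Mq A B φ N :=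
  ((relSub (Qt A B φ N) H N (fK A B φ N)).mkQ).toAddMonoidHom

lemma mkHom_eq (t : Tt A B φ N) : mkHom A B φ N t = Submodule.Quotient.mk t := rfl

lemma chi_theta_core (hA : N ⊓ A = ⊥) (hB : N ⊓ B = ⊥) (q : Qt A B φ N) (n : ↥N) :
    chi A B φ N hA hB (ell A B φ N q (Additive.ofMul (Abelianization.of n))) =
      Submodule.Quotient.mk (MonoidAlgebra.of ℤ (Qt A B φ N) q ⊗ₜ[ℤ]
        (Additive.ofMul (Abelianization.of n))) := by
  rw [ell_of, chi_of]
  have hcoe : (↑(conjOfHom A B φ N (SQ A B φ N q) n) : HNNExtension H A B φ) =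
      SQ A B φ N q * ofG A B φ ↑n * (SQ A B φ N q)⁻¹ := rfl
  rw [hcoe, DD_conj_one A B φ N hA hB (SQ A B φ N q) (ofG A B φ ↑n)
    (of_mem_K A B φ N ↑n n.2)]
  rw [show DD A B φ N hA hB (ofG A B φ ↑n) = dH A B φ N ↑n from DD_of A B φ N hA hB ↑n]
  rw [dH_of_mem A B φ N ↑n n.2 1, pi_SQ, smul_mk_tmul, of_mul_single, inv_one, mul_one]
  rw [show (⟨(↑n : H), n.2⟩ : ↥N) = n from rfl]
  rw [MonoidAlgebra.of_apply]

lemma chi_theta (hA : N ⊓ A = ⊥) (hB : N ⊓ B = ⊥) (z : Mq A B φ N) :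
    chi A B φ N hA hB (thetaBar A B φ N z) = z := by
  obtain ⟨t, rfl⟩ := Submodule.Quotient.mk_surjective _ z
  rw [← mkHom_eq]
  induction t using TensorProduct.induction_on with
  | zero => rw [map_zero, map_zero, map_zero]
  | add u v hu hv => rw [map_add, map_add, map_add, hu, hv]
  | tmul a m =>
      induction a using MonoidAlgebra.induction_linear with
      | zero =>
          rw [TensorProduct.zero_tmul, map_zero, map_zero, map_zero]
      | add f g hf hg =>
          rw [TensorProduct.add_tmul, map_add, map_add, map_add, hf, hg]
      | single q c =>
          obtain ⟨n, hn⟩ := ab_surj (Additive.toMul m)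
          have hm : m = Additive.ofMul (Abelianization.of n) := by rw [hn]; rfl
          subst hm
          have hsingle : (MonoidAlgebra.single q c : MonoidAlgebra ℤ (Qt A B φ N)) =
              c • MonoidAlgebra.of ℤ (Qt A B φ N) q := by
            rw [MonoidAlgebra.of_apply, MonoidAlgebra.smul_single', mul_one]
          rw [hsingle, ← TensorProduct.smul_tmul', map_zsmul, map_zsmul, map_zsmul]
          rw [mkHom_eq, thetaBar_mk, theta0_of, chi_theta_core A B φ N hA hB q n]

lemma theta_equivariant (hA : N ⊓ A = ⊥) (hB : N ⊓ B = ⊥) (g : HNNExtension H A B φ)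
    (z : Mq A B φ N) :
    thetaBar A B φ N (MonoidAlgebra.of ℤ (Qt A B φ N) (pi A B φ N g) • z) =
      actK A B φ N g (thetaBar A B φ N z) := by
  obtain ⟨t, rfl⟩ := Submodule.Quotient.mk_surjective _ z
  rw [← mkHom_eq]
  induction t using TensorProduct.induction_on with
  | zero => simp
  | add u v hu hv => rw [map_add, map_add, smul_add, map_add, map_add, hu, hv]
  | tmul a m =>
      induction a using MonoidAlgebra.induction_linear with
      | zero => simp
      | add f g' hf hg =>
          rw [TensorProduct.add_tmul, map_add, map_add, smul_add, map_add, map_add, hf, hg]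
      | single q c =>
          obtain ⟨n, hn⟩ := ab_surj (Additive.toMul m)
          have hm : m = Additive.ofMul (Abelianization.of n) := by rw [hn]; rfl
          subst hm
          have hsingle : (MonoidAlgebra.single q c : MonoidAlgebra ℤ (Qt A B φ N)) =
              c • MonoidAlgebra.of ℤ (Qt A B φ N) q := by
            rw [MonoidAlgebra.of_apply, MonoidAlgebra.smul_single', mul_one]
          rw [hsingle, ← TensorProduct.smul_tmul', map_zsmul, smul_comm, map_zsmul,
            map_zsmul]
          congr 1
          rw [mkHom_eq, thetaBar_mk, theta0_of]
          rw [show MonoidAlgebra.of ℤ (Qt A B φ N) (pi A B φ N g) •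
              (Submodule.Quotient.mk (MonoidAlgebra.of ℤ (Qt A B φ N) q ⊗ₜ[ℤ]
                Additive.ofMul (Abelianization.of n)) : Mq A B φ N) =
              Submodule.Quotient.mk ((MonoidAlgebra.of ℤ (Qt A B φ N)
                (pi A B φ N g * q)) ⊗ₜ[ℤ] Additive.ofMul (Abelianization.of n)) from by
            rw [smul_mk_tmul, ← map_mul]]
          rw [thetaBar_mk, theta0_of]
          rw [ell_conj A B φ N (g * SQ A B φ N q) (pi A B φ N g * q)
            (by rw [map_mul, pi_SQ]) n]
          rw [ell_conj A B φ N (SQ A B φ N q) q (pi_SQ A B φ N q) n]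
          have hmem : g * ↑(conjOfHom A B φ N (SQ A B φ N q) n) * g⁻¹ ∈ K A B φ N :=
            Subgroup.Normal.conj_mem inferInstance _ (conjOfHom A B φ N (SQ A B φ N q) n).2 g
          rw [map_zsmul, actK_of A B φ N g _ hmem]
          refine congrArg (c • ·) (congrArg Additive.ofMul (congrArg Abelianization.of
            (Subtype.ext ?_)))
          show (g * SQ A B φ N q) * ofG A B φ ↑n * (g * SQ A B φ N q)⁻¹ =
            g * (SQ A B φ N q * ofG A B φ ↑n * (SQ A B φ N q)⁻¹) * g⁻¹
          group

/-- the subgroup witnessing `θ̄ ∘ χ = id` -/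
def Sgp (hA : N ⊓ A = ⊥) (hB : N ⊓ B = ⊥) : Subgroup (HNNExtension H A B φ) where
  carrier := {g | ∃ hg : g ∈ K A B φ N,
    thetaBar A B φ N (DD A B φ N hA hB g 1) =
      Additive.ofMul (Abelianization.of (⟨g, hg⟩ : ↥(K A B φ N)))}
  one_mem' := by
    refine ⟨(K A B φ N).one_mem, ?_⟩
    rw [DD_one A B φ N hA hB]
    show (0 : Kab A B φ N) = _
    rw [show (⟨(1 : HNNExtension H A B φ), (K A B φ N).one_mem⟩ : ↥(K A B φ N)) = 1
      from rfl, map_one]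
    rfl
  mul_mem' := by
    rintro g₁ g₂ ⟨hg₁, h1⟩ ⟨hg₂, h2⟩
    refine ⟨Subgroup.mul_mem _ hg₁ hg₂, ?_⟩
    rw [DD_add_on_K A B φ N hA hB g₁ g₂ hg₁, map_add, h1, h2]
    show Additive.ofMul (Abelianization.of (⟨g₁, hg₁⟩ : ↥(K A B φ N)) *
      Abelianization.of (⟨g₂, hg₂⟩ : ↥(K A B φ N))) = _
    rw [← map_mul]
    rfl
  inv_mem' := by
    rintro g ⟨hg, h1⟩
    refine ⟨Subgroup.inv_mem _ hg, ?_⟩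
    have hinv : DD A B φ N hA hB g⁻¹ = -(DD A B φ N hA hB g) := by
      have := DD_inv A B φ N hA hB g
      rw [pi_eq_one_of_mem A B φ N g hg, actV_one] at this
      exact this
    rw [hinv]
    show thetaBar A B φ N (-(DD A B φ N hA hB g 1)) = _
    rw [map_neg, h1]
    show Additive.ofMul ((Abelianization.of (⟨g, hg⟩ : ↥(K A B φ N)))⁻¹) = _
    rw [← map_inv]
    rfl

lemma Sgp_normal (hA : N ⊓ A = ⊥) (hB : N ⊓ B = ⊥) : (Sgp A B φ N hA hB).Normal := by
  constructor
  rintro g ⟨hg, h1⟩ g'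
  have hmem : g' * g * g'⁻¹ ∈ K A B φ N := Subgroup.Normal.conj_mem inferInstance _ hg g'
  refine ⟨hmem, ?_⟩
  rw [DD_conj_one A B φ N hA hB g' g hg, theta_equivariant A B φ N hA hB, h1,
    actK_of A B φ N g' _ hmem]

lemma K_le_Sgp (hA : N ⊓ A = ⊥) (hB : N ⊓ B = ⊥) :
    K A B φ N ≤ Sgp A B φ N hA hB := by
  haveI := Sgp_normal A B φ N hA hB
  apply Subgroup.normalClosure_le_normal
  rintro x ⟨n, hn, rfl⟩
  refine ⟨of_mem_K A B φ N n hn, ?_⟩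
  rw [DD_of A B φ N hA hB, dH_of_mem A B φ N n hn 1, thetaBar_mk, inv_one, theta0_single,
    one_smul, ell_conj A B φ N 1 1 (map_one _) ⟨n, hn⟩]
  refine congrArg Additive.ofMul (congrArg Abelianization.of (Subtype.ext ?_))
  show (1 : HNNExtension H A B φ) * ofG A B φ n * (1 : HNNExtension H A B φ)⁻¹ =
    ofG A B φ n
  group

lemma theta_chi (hA : N ⊓ A = ⊥) (hB : N ⊓ B = ⊥) (x : Kab A B φ N) :
    thetaBar A B φ N (chi A B φ N hA hB x) = x := by
  obtain ⟨k, hk⟩ := ab_surj (Additive.toMul x)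
  have hx : x = Additive.ofMul (Abelianization.of k) := by rw [hk]; rfl
  subst hx
  rw [chi_of]
  obtain ⟨hg, h1⟩ := K_le_Sgp A B φ N hA hB k.2
  rw [h1]

end ChiSec

end RelAux

/-- **The relative relation module of a Dehn filling of an HNN-extension.**
Let `G = H∗_t` be the HNN-extension of a group `H` with associated subgroups `A, B ≤ H`
(given by an isomorphism `φ : A ≃* B`). Let `N` be a normal subgroup of `H` with
`N ∩ A = {1}` and `N ∩ B = {1}`, let `⟪N⟫` be the normal closure of (the image of) `N`
in `G`, `Q = G/⟪N⟫` and `R = H/N`. Then `Rel(G, ⟪N⟫) ≅ ℤQ ⊗_{ℤR} Rel(H, N)` as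
`ℤQ`-modules. -/
theorem hnn_relModule {H : Type*} [Group H] (A B : Subgroup H) (φ : A ≃* B)
    (N : Subgroup H) [N.Normal] (hA : N ⊓ A = ⊥) (hB : N ⊓ B = ⊥) :
    RelModuleIsoInd (HNNExtension H A B φ)
      (HNNExtension.of : H →* HNNExtension H A B φ) N
      (Subgroup.normalClosure
        ((N.map (HNNExtension.of : H →* HNNExtension H A B φ)) :
          Set (HNNExtension H A B φ))) := by
  unfold RelModuleIsoInd
  refine ⟨AddEquiv.mk' (Equiv.mk (RelAux.chi A B φ N hA hB) (RelAux.thetaBar A B φ N)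
      (fun x => RelAux.theta_chi A B φ N hA hB x)
      (fun z => RelAux.chi_theta A B φ N hA hB z))
      (fun x y => (RelAux.chi A B φ N hA hB).map_add x y), ?_⟩
  intro g x
  have h := RelAux.chi_equivariant A B φ N hA hB g x
  erw [RelAux.actK_eq] at h
  exact h
end
end

section
/- Let G be a group, let {H_λ}_{λ∈Λ} be a family of subgroups of G, and for each λ let N_λ be a nontrivial normal subgroup of H_λ. Let N = ⋃_{λ∈Λ} N_λ and let ⟪N⟫ be the normal closure of N in G. If the triple (G, {H_λ}_{λ∈Λ}, {N_λ}_{λ∈Λ}) has the Cohen-Lyndon property, then for every λ ∈ Λ one has H_λ ∩ ⟪N⟫ = N_λ; equivalently, the natural homomorphism H_λ/N_λ → G/⟪N⟫ is injective. -/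
namespace CLaux

open Monoid Monoid.CoprodI

variable {ι : Type*} {M : ι → Type*} [∀ i, Group (M i)]

section
variable [DecidableEq ι] [∀ i, DecidableEq (M i)]

theorem prod_injective : Function.Injective (Word.prod : Word M → CoprodI M) :=
  fun _ _ huv => Word.equiv.symm.injective huv

theorem prod_equiv (x : CoprodI M) : (Word.equiv x).prod = x :=
  Word.equiv.symm_apply_apply x

theorem equiv_prod (w : Word M) : Word.equiv w.prod = w :=
  Word.equiv.apply_symm_apply w

end

/-- the single-letter word -/
def single {p : ι} (a : M p) (ha : a ≠ 1) : Word M :=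
  ⟨[⟨p, a⟩], by simpa using ha, List.isChain_singleton _⟩

theorem prod_single {p : ι} (a : M p) (ha : a ≠ 1) : (single a ha).prod = of a := by
  simp [single, Word.prod]

theorem equiv_of [DecidableEq ι] [∀ i, DecidableEq (M i)] {p : ι} (a : M p) (ha : a ≠ 1) :
    Word.equiv (of a) = single a ha := by
  apply prod_injective
  rw [prod_equiv, prod_single]

/-- inverse of a word -/
def invWord (w : Word M) : Word M where
  toList := (w.toList.map fun l => ⟨l.1, l.2⁻¹⟩).reverse
  ne_one := by
    intro l hl
    rw [List.mem_reverse, List.mem_map] at hl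
    obtain ⟨l', hl', rfl⟩ := hl
    simpa using w.ne_one l' hl'
  chain_ne := by
    rw [List.isChain_reverse]
    refine (List.isChain_map _).2 ?_
    exact List.IsChain.imp (fun a b h => Ne.symm h) w.chain_ne

theorem invWord_aux : ∀ L : List (Σ i, M i),
    (((L.map fun l => (⟨l.1, l.2⁻¹⟩ : Σ i, M i)).reverse).map fun l => of l.2).prod
      = ((L.map fun l => of l.2).prod)⁻¹ := by
  intro L
  induction L with
  | nil => simp
  | cons l L ih =>
    simp only [List.map_map, List.map_reverse] at ih ⊢
    simp [ih, mul_inv_rev]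

theorem prod_invWord (w : Word M) : (invWord w).prod = w.prod⁻¹ := by
  rw [Word.prod, Word.prod, invWord]
  exact invWord_aux w.toList

theorem tail_spec (w : Word M) {i : ι} {m : M i} {rest : List (Σ i, M i)}
    (hL : w.toList = ⟨i, m⟩ :: rest) :
    ∃ w' : Word M, w'.toList = rest ∧ w.prod = of m * w'.prod ∧ w'.fstIdx ≠ some i := by
  have hchain := w.chain_ne
  rw [hL] at hchain
  refine ⟨⟨rest, fun l hl => w.ne_one l (hL ▸ List.mem_cons_of_mem _ hl), hchain.tail⟩,
    rfl, ?_, ?_⟩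
  · rw [Word.prod, Word.prod]
    simp only [hL, List.map_cons, List.prod_cons]
  · rcases List.isChain_cons.1 hchain with ⟨hhead, -⟩
    cases rest with
    | nil => simp [Word.fstIdx]
    | cons l rest => simpa [Word.fstIdx] using (hhead l rfl).symm

theorem of_ne_one {p : ι} {a : M p} (ha : a ≠ 1) : (of a : CoprodI M) ≠ 1 := by
  intro h
  exact ha (of_injective p (by rw [h, map_one]))

/-- Key combinatorial lemma: if a conjugate of a nontrivial letter is a letter, then the
conjugating element is itself a letter from the same factor. -/
theorem conj_letter [DecidableEq ι] [∀ i, DecidableEq (M i)] :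
    ∀ (n : ℕ) (x : CoprodI M) (p q : ι) (a : M p) (b : M q),
    (Word.equiv x).toList.length = n → a ≠ 1 → x * of a * x⁻¹ = of b →
    q = p ∧ ∃ c : M p, x = of c := by
  intro n
  induction n using Nat.strong_induction_on with
  | _ n ih =>
  intro x p q a b hlen ha h
  have hofa : (of a : CoprodI M) ≠ 1 := of_ne_one ha
  have hofb : (of b : CoprodI M) ≠ 1 := by
    rw [← h]
    intro h1
    apply hofa
    have : of a = x⁻¹ * (x * of a * x⁻¹) * x := by group
    rw [this, h1]; group
  have hb1 : b ≠ 1 := fun hb => hofb (by rw [hb, map_one])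
  have hx : (Word.equiv x).prod = x := prod_equiv x
  rcases List.eq_nil_or_concat (Word.equiv x).toList with hnil | ⟨L', ⟨r, mL⟩, hcat⟩
  · -- x = 1
    have hx1 : x = 1 := by
      rw [← hx, Word.prod, hnil]; simp
    have hab : (of a : CoprodI M) = of b := by
      rw [← h, hx1]; group
    have := congrArg (fun w => Word.toList w) (by
      rw [← equiv_of a ha, ← equiv_of b hb1, hab] :
        (single a ha : Word M) = single b hb1)
    simp only [single] at this
    have h2 : (⟨p, a⟩ : Σ i, M i) = ⟨q, b⟩ := (List.cons.injEq _ _ _ _ ▸ this).1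
    have hpq : p = q := congrArg Sigma.fst h2
    subst hpq
    exact ⟨rfl, 1, by rw [map_one, hx1]⟩
  · -- x nonempty, last letter ⟨r, mL⟩
    have hinv : Word.equiv x⁻¹ = invWord (Word.equiv x) := by
      apply prod_injective
      rw [prod_equiv, prod_invWord, hx]
    have hinvlist : (invWord (Word.equiv x)).toList
        = ⟨r, mL⁻¹⟩ :: ((L'.map fun l => (⟨l.1, l.2⁻¹⟩ : Σ i, M i)).reverse) := by
      show ((Word.equiv x).toList.map fun l => (⟨l.1, l.2⁻¹⟩ : Σ i, M i)).reverse = _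
      rw [hcat]
      simp
    by_cases hr : r = p
    · subst hr
      -- strip the head of x⁻¹
      obtain ⟨w'', hw''list, hw''prod, hw''fst⟩ := tail_spec (invWord (Word.equiv x)) hinvlist
      set y := w''.prod with hy
      have hxinv : x⁻¹ = (of mL)⁻¹ * y := by
        rw [← map_inv, ← hw''prod, prod_invWord, hx]
      have hxx : x = y⁻¹ * of mL := by
        rw [← inv_inv x, hxinv]; group
      have h2 : x⁻¹ * of b * x = of a := by rw [← h]; group
      have h3 : y * of b * y⁻¹ = of (mL * a * mL⁻¹) := by
        rw [map_mul, map_mul, map_inv, ← h2, hxinv, hxx]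
        group
      have hylen : (Word.equiv y).toList.length = L'.length := by
        rw [hy, equiv_prod, hw''list]
        simp
      have hlt : L'.length < n := by
        rw [← hlen, hcat]
        simp
      obtain ⟨hqp, c, hc⟩ := ih L'.length hlt y q r b (mL * a * mL⁻¹) hylen hb1 h3
      subst hqp
      by_cases hc1 : c = 1
      · refine ⟨rfl, mL, ?_⟩
        rw [hxx, hc, hc1, map_one]
        group
      · exfalso
        apply hw''fst
        have : Word.equiv y = single c hc1 := by rw [hc]; exact equiv_of c hc1
        rw [hy, equiv_prod] at this
        rw [this] at hw''list ⊢
        rfl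
    · -- contradiction: the conjugate has a long reduced word
      exfalso
      set W := Word.equiv x with hW
      set V := invWord W with hV
      have hVchain := V.chain_ne
      have hbig : ∃ W3 : Word M,
          W3.toList = W.toList ++ ⟨p, a⟩ :: V.toList ∧ W3.prod = x * of a * x⁻¹ := by
        refine ⟨⟨W.toList ++ ⟨p, a⟩ :: V.toList, ?_, ?_⟩, rfl, ?_⟩
        · intro l hl
          rcases List.mem_append.1 hl with hl | hl
          · exact W.ne_one l hl
          · rcases List.mem_cons.1 hl with rfl | hl
            · exact ha
            · exact V.ne_one l hl
        · rw [List.isChain_append]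
          refine ⟨W.chain_ne, ?_, ?_⟩
          · rw [List.isChain_cons]
            refine ⟨?_, V.chain_ne⟩
            intro l hl
            rw [hV, hinvlist] at hl
            simp only [List.head?_cons, Option.mem_def, Option.some.injEq] at hl
            subst hl
            exact fun hh => hr hh.symm
          · intro l1 hl1 l2 hl2
            rw [hcat, List.concat_eq_append, List.getLast?_concat] at hl1
            simp only [Option.mem_def, Option.some.injEq] at hl1 hl2
            subst hl1
            rw [List.head?_cons, Option.some.injEq] at hl2
            subst hl2
            exact hr
        · rw [Word.prod, List.map_append, List.prod_append, List.map_cons, List.prod_cons]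
          have h1 : (W.toList.map fun l => of l.2).prod = x := by rw [← Word.prod, hW, hx]
          have h2 : (V.toList.map fun l => of l.2).prod = x⁻¹ := by
            rw [← Word.prod, hV, prod_invWord, hW, hx]
          rw [h1, h2, mul_assoc]
      obtain ⟨W3, hW3list, hW3prod⟩ := hbig
      have : W3 = single b hb1 := prod_injective (by rw [hW3prod, prod_single, h])
      have hlL := congrArg (fun w => w.toList.length) this
      simp only [hW3list, single, List.length_append, List.length_cons] at hlL
      rw [hcat] at hlL
      simp at hlL
      omega

end CLaux


/-- A subset `T` of `G` is a left transversal of a subgroup `K` if every left coset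
of `K` in `G` contains exactly one element of `T`. -/
def IsLeftTransversal {G : Type*} [Group G] (K : Subgroup G) (T : Set G) : Prop :=
  ∀ g : G, ∃! t : G, t ∈ T ∧ t⁻¹ * g ∈ K

/-- The normal closure in `G` of (the subgroup generated by) the union of a family of
subgroups `N i`. -/
abbrev familyNC {G : Type*} [Group G] {ι : Type*} (N : ι → Subgroup G) : Subgroup G :=
  Subgroup.normalClosure (⋃ i, (N i : Set G))

/-- The triple `(G, {H i}, {N i})` has the Cohen-Lyndon property, witnessed by the left
transversals `T i` of `H i ⟪N⟫` in `G`: the canonical homomorphism from the free product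
of the conjugates `t (N i) t⁻¹`, indexed by pairs `(i, t)` with `t ∈ T i`, to `G` is
injective with image the normal closure `⟪N⟫`. -/
def CohenLyndonFamilyWith {G : Type*} [Group G] {ι : Type*}
    (H : ι → Subgroup G) (N : ι → Subgroup G) (T : ι → Set G) : Prop :=
  (∀ i, IsLeftTransversal (H i ⊔ familyNC N) (T i)) ∧
  Function.Injective (Monoid.CoprodI.lift
    fun p : (Σ i, ↥(T i)) => ((N p.1).map (MulAut.conj (p.2 : G)).toMonoidHom).subtype) ∧
  (Monoid.CoprodI.lift
    fun p : (Σ i, ↥(T i)) => ((N p.1).map (MulAut.conj (p.2 : G)).toMonoidHom).subtype).range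
    = familyNC N

/-- The triple `(G, {H i}, {N i})` has the Cohen-Lyndon property. -/
def CohenLyndonFamily {G : Type*} [Group G] {ι : Type*}
    (H : ι → Subgroup G) (N : ι → Subgroup G) : Prop :=
  ∃ T : ι → Set G, CohenLyndonFamilyWith H N T

/-- **The Cohen–Lyndon property implies that Dehn filling is injective on the factors.**
Let `G` be a group, `{H i}` a family of subgroups of `G`, and for each `i` let `N i` be a
nontrivial normal subgroup of `H i`. Let `⟪N⟫` be the normal closure in `G` of the union
of the `N i`. If the triple `(G, {H i}, {N i})` has the Cohen-Lyndon property, then for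
every `i` one has `H i ∩ ⟪N⟫ = N i`; equivalently, the natural homomorphism
`H i / N i → G/⟪N⟫` is injective. -/
theorem cohenLyndon_inf_normalClosure {G : Type*} [Group G] {ι : Type*}
    (H : ι → Subgroup G) (N : ∀ i, Subgroup ↥(H i)) [∀ i, (N i).Normal]
    (hnt : ∀ i, N i ≠ ⊥)
    (hCL : CohenLyndonFamily H (fun j => (N j).map (H j).subtype)) (i : ι) :
    H i ⊓ familyNC (fun j => (N j).map (H j).subtype) = (N i).map (H i).subtype := by
    classical
  obtain ⟨T, htrans, hinj, hrange⟩ := hCL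
  refine le_antisymm ?_ (le_inf (Subgroup.map_subtype_le _) fun z hz =>
    Subgroup.subset_normalClosure (Set.mem_iUnion.2 ⟨i, hz⟩))
  intro g hg
  rw [Subgroup.mem_inf] at hg
  obtain ⟨hgH, hgK⟩ := hg
  obtain ⟨t, ⟨htT, -⟩, -⟩ := htrans i 1
  obtain ⟨n, hn1⟩ := Subgroup.ne_bot_iff_exists_ne_one.1 (hnt i)
  -- notation
  set N' : ι → Subgroup G := fun j => (N j).map (H j).subtype with hN'
  have hKnormal : (familyNC N').Normal := Subgroup.normalClosure_normal
  set n0 : G := ((n : ↥(H i)) : G) with hn0def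
  have hn0mem : n0 ∈ N' i := ⟨(n : ↥(H i)), n.2, rfl⟩
  have hn0ne : n0 ≠ 1 := fun hh => hn1 (Subtype.ext (Subtype.ext hh))
  set p : Σ j, ↥(T j) := ⟨i, ⟨t, htT⟩⟩ with hp
  set A : Subgroup G := (N' i).map (MulAut.conj t).toMonoidHom with hA
  set a : G := t * n0 * t⁻¹ with hadef
  have haA : a ∈ A := ⟨n0, hn0mem, by simp [MulAut.conj_apply, hadef]⟩
  have ha1 : a ≠ 1 := by
    intro hh
    apply hn0ne
    have h5 : n0 = t⁻¹ * (t * n0 * t⁻¹) * t := by group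
    rw [h5, ← hadef, hh]
    group
  set x : G := t * g * t⁻¹ with hxdef
  have hxK : x ∈ familyNC N' := hKnormal.conj_mem g hgK t
  have hgn : g * n0 * g⁻¹ ∈ N' i := by
    refine ⟨(⟨g, hgH⟩ : H i) * (n : ↥(H i)) * (⟨g, hgH⟩ : H i)⁻¹,
      (‹∀ j, (N j).Normal› i).conj_mem _ n.2 _, ?_⟩
    rfl
  set b : G := x * a * x⁻¹ with hbdef
  have hbA : b ∈ A := by
    refine ⟨g * n0 * g⁻¹, hgn, ?_⟩
    simp only [MulAut.conj_apply, MulEquiv.coe_toMonoidHom, hbdef, hxdef, hadef]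
    group
  -- pass through the free product
  obtain ⟨X, hX⟩ : x ∈ (Monoid.CoprodI.lift
      fun q : (Σ j, ↥(T j)) =>
        ((N' q.1).map (MulAut.conj (q.2 : G)).toMonoidHom).subtype).range := by
    rw [hrange]; exact hxK
  set aEl : ↥((N' p.1).map (MulAut.conj (p.2 : G)).toMonoidHom) := ⟨a, haA⟩ with haEl
  set bEl : ↥((N' p.1).map (MulAut.conj (p.2 : G)).toMonoidHom) := ⟨b, hbA⟩ with hbEl
  have haEl1 : aEl ≠ 1 := fun hh => ha1 (by simpa [haEl] using congrArg Subtype.val hh)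
  have key : X * Monoid.CoprodI.of (M := fun q : (Σ j, ↥(T j)) =>
      ↥((N' q.1).map (MulAut.conj (q.2 : G)).toMonoidHom)) aEl * X⁻¹
      = Monoid.CoprodI.of (M := fun q : (Σ j, ↥(T j)) =>
      ↥((N' q.1).map (MulAut.conj (q.2 : G)).toMonoidHom)) bEl := by
    apply hinj
    rw [map_mul, map_mul, map_inv, hX, Monoid.CoprodI.lift_of, Monoid.CoprodI.lift_of]
    rfl
  obtain ⟨-, c, hc⟩ := CLaux.conj_letter _ X p p aEl bEl rfl haEl1 key
  have hxc : x = (c : G) := by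
    rw [← hX, hc, Monoid.CoprodI.lift_of]
    rfl
  have hxA : x ∈ A := hxc ▸ c.2
  obtain ⟨z, hzN, hz⟩ := hxA
  have h5 : t * z * t⁻¹ = t * g * t⁻¹ := by
    simpa [MulAut.conj_apply, hxdef] using hz
  have h6 : z = g := mul_left_cancel (mul_right_cancel h5)
  exact h6 ▸ hzN
end

section
/- Let A and B be nontrivial groups. Then the normalizer of A in the free product A ∗ B is A itself: N_{A∗B}(A) = A, where A is regarded as a subgroup of A ∗ B via the canonical embedding. -/
namespace FreeProdNormalizer

open Monoid.CoprodI

variable {ι : Type*} {G : ι → Type*} [∀ i, Group (G i)]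

section words

variable [DecidableEq ι] [∀ i, DecidableEq (G i)]

theorem prod_equiv (g : Monoid.CoprodI G) : Word.prod (Word.equiv g) = g :=
  Word.equiv.symm_apply_apply g

theorem equiv_prod (w : Word G) : Word.equiv (Word.prod w) = w :=
  Word.equiv.apply_symm_apply w

theorem equiv_of_toList (i : ι) (a : G i) :
    (Word.equiv (of a)).toList = if a = 1 then [] else [⟨i, a⟩] := by
  have h : Word.fstIdx (Word.empty : Word G) ≠ some i := by
    simp [Word.fstIdx, Word.empty]
  have : Word.equiv (of a) = of a • (Word.empty : Word G) := rfl
  rw [this, Word.of_smul_def, Word.equivPair_eq_of_fstIdx_ne h]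
  by_cases ha : a = 1
  · subst ha
    simp [Word.rcons]
  · rw [Word.rcons]
    simp only [mul_one]
    rw [dif_neg ha, if_neg ha]
    simp [Word.cons]

theorem toList_length_le_one {i : ι} {g : Monoid.CoprodI G}
    (h : g ∈ MonoidHom.range (of : G i →* Monoid.CoprodI G)) :
    (Word.equiv g).toList.length ≤ 1 := by
  obtain ⟨a, rfl⟩ := h
  rw [equiv_of_toList]
  split <;> simp

theorem equiv_inv_toList (g : Monoid.CoprodI G) :
    (Word.equiv g⁻¹).toList
      = ((Word.equiv g).toList.map fun l => (⟨l.1, l.2⁻¹⟩ : Σ i, G i)).reverse := by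
  set w := Word.equiv g with hw
  have hne : ∀ l ∈ (w.toList.map fun l => (⟨l.1, l.2⁻¹⟩ : Σ i, G i)).reverse,
      Sigma.snd l ≠ 1 := by
    intro l hl
    rw [List.mem_reverse, List.mem_map] at hl
    obtain ⟨l₀, hl₀, rfl⟩ := hl
    exact inv_ne_one.2 (w.ne_one l₀ hl₀)
  have hch : (w.toList.map fun l => (⟨l.1, l.2⁻¹⟩ : Σ i, G i)).reverse.Chain'
      fun l l' => Sigma.fst l ≠ Sigma.fst l' := by
    rw [List.Chain', List.isChain_reverse, List.isChain_map]
    exact w.chain_ne.imp fun a b h => Ne.symm h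
  set w' : Word G := ⟨_, hne, hch⟩ with hw'
  have hmaps : w'.toList.map (fun l => of l.snd)
      = ((w.toList.map fun l => of l.snd).map fun x => x⁻¹).reverse := by
    show ((w.toList.map fun l => (⟨l.1, l.2⁻¹⟩ : Σ i, G i)).reverse.map fun l => of l.snd) = _
    rw [List.map_reverse, List.map_map, List.map_map]
    congr 1
  have hprod : Word.prod w' = g⁻¹ := by
    have h1 : Word.prod w = g := prod_equiv g
    rw [← h1, Word.prod, Word.prod, hmaps]
    exact (List.prod_inv_reverse _).symm
  have : Word.equiv g⁻¹ = w' := by rw [← hprod, equiv_prod]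
  rw [this]

end words

theorem coprodI_normalizer (i : ι) [Nontrivial (G i)] :
    Subgroup.normalizer ((MonoidHom.range (of : G i →* Monoid.CoprodI G)) : Set (Monoid.CoprodI G))
      = MonoidHom.range (of : G i →* Monoid.CoprodI G) := by
  classical
  refine le_antisymm ?_ Subgroup.le_normalizer
  intro g hg
  by_contra hgA
  set H := MonoidHom.range (of : G i →* Monoid.CoprodI G) with hH
  set p := Word.equivPair i (Word.equiv g⁻¹) with hp
  have hrcons : Word.rcons p = Word.equiv g⁻¹ := by
    rw [hp, ← Word.equivPair_symm]
    exact (Word.equivPair i).symm_apply_apply _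
  set k := Word.prod p.tail with hk
  have hginv : g⁻¹ = of p.head * k := by
    conv_lhs => rw [← prod_equiv g⁻¹]
    rw [← hrcons, Word.prod_rcons]
  have hkN : k ∈ Subgroup.normalizer (H : Set (Monoid.CoprodI G)) := by
    have h1 : of p.head ∈ Subgroup.normalizer (H : Set (Monoid.CoprodI G)) := Subgroup.le_normalizer ⟨p.head, rfl⟩
    have h2 : g⁻¹ ∈ Subgroup.normalizer (H : Set (Monoid.CoprodI G)) := inv_mem hg
    have : k = (of p.head)⁻¹ * g⁻¹ := by rw [hginv]; group
    rw [this]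
    exact mul_mem (inv_mem h1) h2
  have hkH : k ∉ H := by
    intro hmem
    apply hgA
    have : g⁻¹ ∈ H := by rw [hginv]; exact mul_mem ⟨p.head, rfl⟩ hmem
    simpa using inv_mem this
  have hknil : p.tail.toList ≠ [] := by
    intro h0
    apply hkH
    have h1 : p.tail = Word.empty := Word.ext h0
    rw [hk, h1, Word.prod_empty]
    exact one_mem H
  obtain ⟨x, xs, hx⟩ : ∃ x xs, p.tail.toList = x :: xs := List.exists_cons_of_ne_nil hknil
  have hxi : x.1 ≠ i := by
    have h1 := p.fstIdx_ne
    rw [Word.fstIdx, hx] at h1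
    simpa using h1
  have hek : Word.equiv k = p.tail := by rw [hk, equiv_prod]
  have hinv : (Word.equiv k⁻¹).toList
      = (p.tail.toList.map fun l => (⟨l.1, l.2⁻¹⟩ : Σ i, G i)).reverse := by
    rw [equiv_inv_toList, hek]
  have hinvne : Word.equiv k⁻¹ ≠ Word.empty := by
    intro h
    rw [h] at hinv
    rw [hx] at hinv
    simp [Word.empty] at hinv
  obtain ⟨s, t, u, hu⟩ := NeWord.of_word (Word.equiv k⁻¹) hinvne
  have hti : t ≠ i := by
    have h1 : u.toList.getLast? = some ⟨t, u.last⟩ := u.toList_getLast?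
    have h2 : u.toList = (Word.equiv k⁻¹).toList := congrArg Word.toList hu
    rw [h2, hinv, List.getLast?_reverse, hx] at h1
    simp only [List.map_cons, List.head?_cons, Option.some.injEq] at h1
    have h3 := congrArg Sigma.fst h1
    simp at h3
    exact fun h => hxi (h3.trans h)
  have huprod : u.prod = k⁻¹ := by
    rw [NeWord.prod, hu, prod_equiv]
  obtain ⟨a, ha⟩ := exists_ne (1 : G i)
  set v : NeWord G s s :=
    NeWord.append (NeWord.append u hti (NeWord.singleton a ha)) (Ne.symm hti) u.inv with hv
  have hvprod : v.prod = k⁻¹ * of a * k := by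
    rw [hv]
    rw [NeWord.append_prod, NeWord.append_prod, NeWord.prod_singleton, NeWord.inv_prod,
      huprod]
    group
  have hmem : k⁻¹ * of a * k ∈ H := by
    have h1 := (Subgroup.mem_normalizer_iff.mp (inv_mem hkN) (of a)).mp ⟨a, rfl⟩
    rwa [inv_inv] at h1 
  have hlen : (Word.equiv v.prod).toList.length ≤ 1 := by
    rw [hvprod]
    exact toList_length_le_one hmem
  have hev : Word.equiv v.prod = v.toWord := by rw [NeWord.prod, equiv_prod]
  rw [hev] at hlen
  have hlist : v.toWord.toList = u.toList ++ ([⟨i, a⟩] ++ u.inv.toList) := by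
    simp [hv, NeWord.toWord, List.append_assoc]
  rw [hlist] at hlen
  have h1 : u.toList.length ≥ 1 := List.length_pos_iff.2 u.toList_ne_nil
  simp only [List.length_append, List.length_cons, List.length_nil] at hlen
  omega

end FreeProdNormalizer

universe u v

/-- The two-element family of groups used to realize `A ∗ B` as `Monoid.CoprodI`. -/
def FreeProdNormalizer.BoolFam (A : Type u) (B : Type v) : Bool → Type (max u v) :=
  fun b => cond b (ULift.{v} A) (ULift.{u} B)

instance FreeProdNormalizer.instGroupBoolFam (A : Type u) (B : Type v) [Group A] [Group B] :
    ∀ b, Group (FreeProdNormalizer.BoolFam A B b) :=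
  fun b => match b with
  | true => inferInstanceAs (Group (ULift A))
  | false => inferInstanceAs (Group (ULift B))

/-- **The normalizer of a factor of a free product.**
Let `A` and `B` be nontrivial groups. Then the normalizer of `A` in the free product
`A ∗ B` is `A` itself, where `A` is regarded as a subgroup of `A ∗ B` via the canonical
embedding. -/
theorem normalizer_inl_range_coprod {A B : Type*} [Group A] [Group B]
    [Nontrivial A] [Nontrivial B] :
    Subgroup.normalizer ((MonoidHom.range (Monoid.Coprod.inl : A →* Monoid.Coprod A B)) : Set (Monoid.Coprod A B))
      = MonoidHom.range (Monoid.Coprod.inl : A →* Monoid.Coprod A B) := by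
  haveI : Nontrivial (FreeProdNormalizer.BoolFam A B true) :=
    inferInstanceAs (Nontrivial (ULift A))
  set φ : Monoid.Coprod A B →* Monoid.CoprodI (FreeProdNormalizer.BoolFam A B) :=
    Monoid.Coprod.lift
      ((Monoid.CoprodI.of :
          FreeProdNormalizer.BoolFam A B true →* _).comp
        (MulEquiv.ulift.symm : A ≃* ULift A).toMonoidHom)
      ((Monoid.CoprodI.of :
          FreeProdNormalizer.BoolFam A B false →* _).comp
        (MulEquiv.ulift.symm : B ≃* ULift B).toMonoidHom) with hφ
  set ψ : Monoid.CoprodI (FreeProdNormalizer.BoolFam A B) →* Monoid.Coprod A B :=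
    Monoid.CoprodI.lift (fun b => match b with
      | true => Monoid.Coprod.inl.comp (MulEquiv.ulift.toMonoidHom)
      | false => Monoid.Coprod.inr.comp (MulEquiv.ulift.toMonoidHom)) with hψ
  have h1 : ψ.comp φ = MonoidHom.id _ := by
    apply Monoid.Coprod.hom_ext <;> ext x <;>
      simp [hφ, hψ, Monoid.Coprod.lift_apply_inl, Monoid.Coprod.lift_apply_inr,
        Monoid.CoprodI.lift_of, MulEquiv.apply_symm_apply, MulEquiv.symm_apply_apply] <;> rfl
  have h2 : φ.comp ψ = MonoidHom.id _ := by
    apply Monoid.CoprodI.ext_hom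
    intro b
    cases b <;> ext x <;>
      simp [hφ, hψ, Monoid.Coprod.lift_apply_inl, Monoid.Coprod.lift_apply_inr,
        Monoid.CoprodI.lift_of, MulEquiv.apply_symm_apply, MulEquiv.symm_apply_apply] <;> rfl
  have hsurj : Function.Surjective φ := fun y =>
    ⟨ψ y, by rw [← MonoidHom.comp_apply, h2]; rfl⟩
  have hψφ : ∀ x, ψ (φ x) = x := fun x => by rw [← MonoidHom.comp_apply, h1]; rfl
  set K : Subgroup (Monoid.CoprodI (FreeProdNormalizer.BoolFam A B)) :=
    MonoidHom.range (Monoid.CoprodI.of :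
      FreeProdNormalizer.BoolFam A B true →* _) with hK
  have hcomap : K.comap φ = MonoidHom.range (Monoid.Coprod.inl : A →* Monoid.Coprod A B) := by
    ext x
    simp only [Subgroup.mem_comap, MonoidHom.mem_range, hK]
    constructor
    · rintro ⟨u, hu⟩
      refine ⟨MulEquiv.ulift u, ?_⟩
      rw [← hψφ x, ← hu]
      simp [hψ, Monoid.CoprodI.lift_of, MulEquiv.apply_symm_apply, MulEquiv.symm_apply_apply]; rfl
    · rintro ⟨a, rfl⟩
      exact ⟨MulEquiv.ulift.symm a, by simp [hφ, Monoid.Coprod.lift_apply_inl]; rfl⟩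
  calc Subgroup.normalizer ((MonoidHom.range (Monoid.Coprod.inl : A →* Monoid.Coprod A B)) : Set (Monoid.Coprod A B))
      = Subgroup.normalizer ((K.comap φ) : Set (Monoid.Coprod A B)) := by rw [hcomap]
    _ = (Subgroup.normalizer (K : Set (Monoid.CoprodI (FreeProdNormalizer.BoolFam A B)))).comap φ := (Subgroup.comap_normalizer_eq_of_surjective K hsurj).symm
    _ = K.comap φ := by rw [hK, FreeProdNormalizer.coprodI_normalizer true]
    _ = _ := hcomap
end

section
/- Let A and B be groups and let G = A ∗ B be their free product, with A regarded as a subgroup of G via the canonical embedding. If a ∈ A and g ∈ G with g ∉ A and g a g⁻¹ ∈ A, then a = 1. Equivalently, A ∩ g⁻¹Ag = {1} for every g ∈ G \ A. -/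
namespace MalnormalAux

open Monoid Monoid.CoprodI

variable {ι : Type*} {G : ι → Type*} [∀ i, Group (G i)]

theorem word_prod_ne_one {w : Word G} (h : w ≠ Word.empty) : w.prod ≠ 1 := by
  classical
  intro h1
  apply h
  have h2 : Word.equiv.symm w = Word.equiv.symm (Word.empty : Word G) := by
    show w.prod = Word.prod (Word.empty : Word G)
    simp [h1]
  exact Word.equiv.symm.injective h2

theorem neWord_prod_ne_one {i j : ι} (w : NeWord G i j) : w.prod ≠ 1 :=
  word_prod_ne_one (fun h => w.toList_ne_nil (congrArg Word.toList h))

/-- The inverse of a reduced word. -/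
def wordInv (w : Word G) : Word G where
  toList := (w.toList.map fun l => ⟨l.1, l.2⁻¹⟩).reverse
  ne_one := by
    intro l hl
    rw [List.mem_reverse, List.mem_map] at hl
    obtain ⟨x, hx, rfl⟩ := hl
    simpa using w.ne_one x hx
  chain_ne := by
    rw [List.isChain_reverse]
    refine (List.isChain_map _).2 ?_
    exact w.chain_ne.imp fun a b h => h.symm

theorem wordInv_prod (w : Word G) : (wordInv w).prod = w.prod⁻¹ := by
  simp only [Word.prod, wordInv, List.map_reverse, List.map_map]
  rw [List.prod_inv_reverse]
  congr 1
  rw [List.map_map]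
  rfl

theorem wordInv_toList (w : Word G) :
    (wordInv w).toList = (w.toList.map fun l => ⟨l.1, l.2⁻¹⟩).reverse := rfl

theorem peel {i : ι} {g : CoprodI G} (hg : g ∉ (of : G i →* CoprodI G).range) :
    ∃ (j k : ι) (W : NeWord G j k) (s t : G i),
      j ≠ i ∧ k ≠ i ∧ g = of s * W.prod * of t := by
  classical
  set w₀ := Word.equiv g with hw₀
  have hgp : w₀.prod = g := Word.equiv.left_inv g
  set p := Word.equivPair i w₀ with hp
  have hrp : Word.rcons p = w₀ := by
    rw [← Word.equivPair_symm, hp]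
    exact (Word.equivPair i).symm_apply_apply w₀
  have hg1 : g = of p.head * p.tail.prod := by
    rw [← hgp, ← hrp, Word.prod_rcons]
  have htne : p.tail ≠ Word.empty := by
    intro h
    exact hg ⟨p.head, by simp [hg1, h]⟩
  have hfst₁ : Word.fstIdx p.tail ≠ some i := p.fstIdx_ne
  set v := wordInv p.tail with hv
  have hvlastaux : v.toList.getLast? = p.tail.toList.head?.map (fun l => ⟨l.1, l.2⁻¹⟩) := by
    rw [hv, wordInv_toList, List.getLast?_reverse, List.head?_map]
  have hvlast : v.toList.getLast?.map Sigma.fst ≠ some i := by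
    rw [hvlastaux]
    intro hcon
    apply hfst₁
    unfold Word.fstIdx
    rcases h : p.tail.toList.head? with _ | x
    · rw [h] at hcon; simp at hcon
    · rw [h] at hcon; simp at hcon ⊢; exact hcon
  have hvne : v ≠ Word.empty := by
    intro h
    apply htne
    have h2 : p.tail.toList = [] := by
      have := congrArg Word.toList h
      rw [hv, wordInv_toList] at this
      simpa using this
    exact Word.ext h2
  set q := Word.equivPair i v with hq
  have hrq : Word.rcons q = v := by
    rw [← Word.equivPair_symm, hq]
    exact (Word.equivPair i).symm_apply_apply v
  have hfst₂ : Word.fstIdx q.tail ≠ some i := q.fstIdx_ne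
  have hw₁prod : p.tail.prod = (wordInv q.tail).prod * of q.head⁻¹ := by
    have h1 : v.prod = of q.head * q.tail.prod := by rw [← hrq, Word.prod_rcons]
    have h2 : v.prod = p.tail.prod⁻¹ := wordInv_prod p.tail
    have h3 : (wordInv q.tail).prod = q.tail.prod⁻¹ := wordInv_prod _
    rw [h3, map_inv]
    rw [h1] at h2
    have h4 : p.tail.prod = (of q.head * q.tail.prod)⁻¹ := by rw [h2, inv_inv]
    rw [h4, mul_inv_rev]
  have hlist : v.toList = q.tail.toList ∨ v.toList = ⟨i, q.head⟩ :: q.tail.toList := by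
    rw [← hrq]
    unfold Word.rcons
    split_ifs
    · left; rfl
    · right; rfl
  have hw₂ne : q.tail.toList ≠ [] := by
    intro h
    rcases hlist with h' | h'
    · exact hvne (Word.ext (by rw [h', h]; rfl))
    · apply hvlast
      rw [h', h]
      rfl
  have hlast₂ : q.tail.toList.getLast?.map Sigma.fst ≠ some i := by
    rcases hlist with h' | h'
    · rw [← h']; exact hvlast
    · have h2 := hvlast
      rw [h'] at h2
      obtain ⟨y, l', hyl⟩ := List.exists_cons_of_ne_nil hw₂ne
      rw [hyl] at h2 ⊢
      rwa [List.getLast?_cons_cons] at h2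
  have hw₂invne : wordInv q.tail ≠ Word.empty := by
    intro h
    apply hw₂ne
    have := congrArg Word.toList h
    rw [wordInv_toList] at this
    simpa using this
  obtain ⟨j, k, W, hW⟩ := NeWord.of_word (wordInv q.tail) hw₂invne
  have hWl : W.toList = (wordInv q.tail).toList := congrArg Word.toList hW
  have hj : j ≠ i := by
    have h2 := W.toList_head?
    rw [hWl, wordInv_toList, List.head?_reverse,
      List.getLast?_map] at h2
    intro hji
    apply hlast₂
    rcases h : q.tail.toList.getLast? with _ | x
    · rw [h] at h2; simp at h2
    · rw [h] at h2
      have h3 : (⟨x.1, x.2⁻¹⟩ : Σ i, G i) = ⟨j, W.head⟩ := by simpa using h2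
      have h4 : x.1 = j := congrArg Sigma.fst h3
      simp [h4, hji]
  have hk : k ≠ i := by
    have h2 := W.toList_getLast?
    rw [hWl, wordInv_toList, List.getLast?_reverse,
      List.head?_map] at h2
    intro hki
    apply hfst₂
    unfold Word.fstIdx
    rcases h : q.tail.toList.head? with _ | x
    · rw [h] at h2; simp at h2
    · rw [h] at h2
      have h3 : (⟨x.1, x.2⁻¹⟩ : Σ i, G i) = ⟨k, W.last⟩ := by simpa using h2
      have h4 : x.1 = k := congrArg Sigma.fst h3
      simp [h4, hki]
  have hWprod : W.prod = (wordInv q.tail).prod := congrArg Word.prod hW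
  refine ⟨j, k, W, p.head, q.head⁻¹, hj, hk, ?_⟩
  rw [hg1, hw₁prod, hWprod, mul_assoc]


theorem coprodI_aux {i : ι} {a : G i} {g : CoprodI G}
    (hg : g ∉ (of : G i →* CoprodI G).range)
    (ha : g * of a * g⁻¹ ∈ (of : G i →* CoprodI G).range) : a = 1 := by
  by_contra ha1
  obtain ⟨b, hb⟩ := ha
  have hb1 : b ≠ 1 := by
    rintro rfl
    apply ha1
    have h2 : of a = (1 : CoprodI G) := by
      have h3 : (1 : CoprodI G) = g * of a * g⁻¹ := by rw [← hb, map_one]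
      calc of a = g⁻¹ * (g * of a * g⁻¹) * g := by group
        _ = 1 := by rw [← h3]; group
    exact of_injective i (by rw [h2, map_one])
  obtain ⟨j, k, W, s, t, hj, hk, hgeq⟩ := peel hg
  have ha'1 : t * a * t⁻¹ ≠ 1 := fun h => ha1 (by
    have h2 : a = t⁻¹ * (t * a * t⁻¹) * t := by group
    rw [h2, h]; group)
  have hb'1 : s⁻¹ * b * s ≠ 1 := fun h => hb1 (by
    have h2 : b = s * (s⁻¹ * b * s) * s⁻¹ := by group
    rw [h2, h]; group)
  have key : W.prod * of (t * a * t⁻¹) * W.prod⁻¹ * (of (s⁻¹ * b * s))⁻¹ = 1 := by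
    have hb' : of (s⁻¹ * b * s) = W.prod * of (t * a * t⁻¹) * W.prod⁻¹ := by
      simp only [map_mul, map_inv]
      rw [hb, hgeq]
      group
    rw [hb']
    group
  exact neWord_prod_ne_one
    (((W.append hk (NeWord.singleton _ ha'1)).append (Ne.symm hk) W.inv).append hj
      (NeWord.singleton _ (inv_ne_one.2 hb'1)))
    (by rw [NeWord.append_prod, NeWord.append_prod, NeWord.append_prod, NeWord.prod_singleton,
      NeWord.prod_singleton, NeWord.inv_prod, map_inv]; exact key)

section Transfer

universe u v

variable (A : Type u) (B : Type v) [Group A] [Group B]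

/-- The two-element family of factors. -/
abbrev Fac : Bool → Type (max u v) := fun b => cond b (ULift.{v} A) (ULift.{u} B)

instance facGroup : ∀ b, Group (Fac A B b)
  | true => inferInstanceAs (Group (ULift A))
  | false => inferInstanceAs (Group (ULift B))

/-- From the binary coproduct to the indexed coproduct. -/
def toCI : Coprod A B →* CoprodI (Fac A B) :=
  Coprod.lift
    ((CoprodI.of (M := Fac A B) (i := true)).comp (MulEquiv.ulift (α := A)).symm.toMonoidHom)
    ((CoprodI.of (M := Fac A B) (i := false)).comp (MulEquiv.ulift (α := B)).symm.toMonoidHom)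

/-- From the indexed coproduct to the binary coproduct. -/
def fromCI : CoprodI (Fac A B) →* Coprod A B :=
  CoprodI.lift fun b => Bool.rec
    ((Coprod.inr : B →* Coprod A B).comp (MulEquiv.ulift (α := B)).toMonoidHom)
    ((Coprod.inl : A →* Coprod A B).comp (MulEquiv.ulift (α := A)).toMonoidHom) b

theorem fromCI_toCI (x : Coprod A B) : fromCI A B (toCI A B x) = x := by
  have h : (fromCI A B).comp (toCI A B) = MonoidHom.id _ := by
    apply Coprod.hom_ext
    · ext a
      show fromCI A B (toCI A B (Coprod.inl a)) = Coprod.inl a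
      rw [show toCI A B (Coprod.inl a) =
        CoprodI.of (M := Fac A B) (i := true) (ULift.up a) from rfl]
      rw [fromCI, CoprodI.lift_of]
      rfl
    · ext b
      show fromCI A B (toCI A B (Coprod.inr b)) = Coprod.inr b
      rw [show toCI A B (Coprod.inr b) =
        CoprodI.of (M := Fac A B) (i := false) (ULift.up b) from rfl]
      rw [fromCI, CoprodI.lift_of]
      rfl
  exact DFunLike.congr_fun h x

theorem toCI_inl (x : A) :
    toCI A B (Coprod.inl x) = CoprodI.of (M := Fac A B) (i := true) (ULift.up x) := by
  simp [toCI, Coprod.lift_apply_inl]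
  rfl

theorem fromCI_of_true (x : Fac A B true) :
    fromCI A B (CoprodI.of (M := Fac A B) (i := true) x) = Coprod.inl x.down := by
  simp [fromCI, CoprodI.lift_of]
  rfl

end Transfer

end MalnormalAux

/-- **Malnormality of a factor of a free product.**
Let `A` and `B` be groups and let `G = A ∗ B` be their free product, with `A` regarded as
a subgroup of `G` via the canonical embedding. If `a ∈ A` and `g ∈ G` with `g ∉ A` and
`g * a * g⁻¹ ∈ A`, then `a = 1`. -/
theorem coprod_conj_mem_inl_range {A B : Type*} [Group A] [Group B]
    (a : A) (g : Monoid.Coprod A B)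
    (hg : g ∉ MonoidHom.range (Monoid.Coprod.inl : A →* Monoid.Coprod A B))
    (ha : g * Monoid.Coprod.inl a * g⁻¹ ∈
      MonoidHom.range (Monoid.Coprod.inl : A →* Monoid.Coprod A B)) :
    a = 1 := by
  open MalnormalAux in
  obtain ⟨c, hc⟩ := ha
  have hg' : toCI A B g ∉
      (Monoid.CoprodI.of : Fac A B true →* Monoid.CoprodI (Fac A B)).range := by
    rintro ⟨x, hx⟩
    apply hg
    refine ⟨x.down, ?_⟩
    have h2 := congrArg (fromCI A B) hx
    rw [fromCI_toCI, fromCI_of_true] at h2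
    exact h2
  have ha' : toCI A B g * Monoid.CoprodI.of (M := Fac A B) (i := true) (ULift.up a) *
      (toCI A B g)⁻¹ ∈
      (Monoid.CoprodI.of : Fac A B true →* Monoid.CoprodI (Fac A B)).range := by
    refine ⟨ULift.up c, ?_⟩
    rw [← toCI_inl, ← toCI_inl, ← map_inv, ← map_mul, ← map_mul, hc]
  have h := coprodI_aux hg' ha'
  exact congrArg ULift.down h
end
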